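/- arXiv:1312.0365 — 5 statements merged into one kernel-verified Lean document; each statement's English description precedes it below -/
import Mathlib

section
/- Let X > 0 be a random variable on a probability space with P[X = 1] < 1. Then there exists a solution p ∈ [0,1) to the equation E[1/(p + (1−p)·X)] = 1 if and only if E[X] > 1 and E[X⁻¹] ≥ 1. If a solution p ∈ [0,1) exists, it is unique; and the unique solution is p = 0 if and only if E[X⁻¹] = 1. -/
open MeasureTheory Set
open scoped ENNReal

lemma tok_core (t a : ℝ) (ht0 : 0 < t) (ht1 : t < 1) (ha : 0 < a) (ha1 : a ≠ 1) :
    1/(t*a+(1-t)) < t * (1/a) + (1-t) := by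
  have hb : 0 < t*a+(1-t) := by nlinarith
  have h2 : 0 < t*(1-t)*(a-1)^2 := by
    have h3 : a - 1 ≠ 0 := sub_ne_zero.mpr ha1
    have h4 : (a-1)^2 > 0 := by positivity
    exact mul_pos (mul_pos ht0 (by linarith)) h4
  have : a ≠ 0 := ne_of_gt ha
  rw [div_lt_iff₀ hb, add_mul, mul_assoc, one_div, mul_comm a⁻¹ _]
  field_simp
  nlinarith

lemma tok_core_le (t a : ℝ) (ht0 : 0 ≤ t) (ht1 : t ≤ 1) (ha : 0 < a) :
    1/(t*a+(1-t)) ≤ t * (1/a) + (1-t) := by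
  rcases eq_or_lt_of_le ht0 with h|h0
  · simp [← h]
  rcases eq_or_lt_of_le ht1 with h|h1
  · simp [h]
  have hb : 0 < t*a+(1-t) := by nlinarith
  have h2 : 0 ≤ t*(1-t)*(a-1)^2 := mul_nonneg (mul_nonneg ht0 (by linarith)) (sq_nonneg _)
  have : a ≠ 0 := ne_of_gt ha
  rw [div_le_iff₀ hb, add_mul, mul_assoc, one_div, mul_comm a⁻¹ _]
  field_simp
  nlinarith

lemma tok_lt_one {Ω : Type*} {𝒜 : MeasurableSpace Ω} (P : @Measure Ω 𝒜) [IsProbabilityMeasure P]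
    (X : Ω → ℝ) (hX_meas : Measurable X) (hX_pos : ∀ᵐ ω ∂P, 0 < X ω)
    (hX_ne_one : P {ω | X ω = 1} < 1)
    {p q : ℝ} (hp0 : 0 ≤ p) (hpq : p < q) (hq1 : q < 1)
    (hFp : ∫⁻ ω, ENNReal.ofReal (1 / (p + (1 - p) * X ω)) ∂P = 1) :
    ∫⁻ ω, ENNReal.ofReal (1 / (q + (1 - q) * X ω)) ∂P < 1 := by
  have hp1 : (0:ℝ) < 1 - p := by linarith
  set t : ℝ := (1-q)/(1-p) with ht_def
  have ht0 : 0 < t := div_pos (by linarith) hp1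
  have ht1 : t < 1 := by rw [div_lt_one hp1]; linarith
  have hsub : ∀ x:ℝ, t*(p+(1-p)*x)+(1-t) = q+(1-q)*x := by
    intro x
    have hne : (1:ℝ) - p ≠ 0 := hp1.ne'
    rw [ht_def]
    field_simp
    ring
  set f : Ω → ℝ≥0∞ := fun ω => ENNReal.ofReal (1/(q+(1-q)*X ω)) with hf_def
  set d : Ω → ℝ≥0∞ :=
    fun ω => ENNReal.ofReal (t*(1/(p+(1-p)*X ω))+(1-t) - 1/(q+(1-q)*X ω)) with hd_def
  have hfm : Measurable f := by fun_prop
  have hdm : Measurable d := by fun_prop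
  have hden : ∀ x:ℝ, 0 < x → 0 < p+(1-p)*x := by intro x hx; nlinarith
  have hdenq : ∀ x:ℝ, 0 < x → 0 < q+(1-q)*x := by intro x hx; nlinarith
  have hle : ∀ x:ℝ, 0 < x → 1/(q+(1-q)*x) ≤ t*(1/(p+(1-p)*x))+(1-t) := by
    intro x hx
    rw [← hsub x]
    exact tok_core_le t _ ht0.le ht1.le (hden x hx)
  have hsum : (∫⁻ ω, f ω ∂P) + (∫⁻ ω, d ω ∂P) = 1 := by
    rw [← lintegral_add_left hfm]
    have hcongr : (fun ω => f ω + d ω) =ᵐ[P]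
        (fun ω => ENNReal.ofReal t * ENNReal.ofReal (1/(p+(1-p)*X ω)) + ENNReal.ofReal (1-t)) := by
      filter_upwards [hX_pos] with ω hω
      have h1 : 0 ≤ 1/(q+(1-q)*X ω) := le_of_lt (by
        have := hdenq (X ω) hω; positivity)
      have h2 : 0 ≤ t*(1/(p+(1-p)*X ω))+(1-t) - 1/(q+(1-q)*X ω) :=
        sub_nonneg.mpr (hle (X ω) hω)
      have h3 : 0 ≤ t*(1/(p+(1-p)*X ω)) := by
        have := hden (X ω) hω; positivity
      have e1 : 1/(q+(1-q)*X ω) + (t*(1/(p+(1-p)*X ω))+(1-t) - 1/(q+(1-q)*X ω))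
          = t*(1/(p+(1-p)*X ω)) + (1-t) := by ring
      show ENNReal.ofReal _ + ENNReal.ofReal _ = _
      rw [← ENNReal.ofReal_add h1 h2, e1, ENNReal.ofReal_add h3 (by linarith),
        ENNReal.ofReal_mul ht0.le]
    rw [lintegral_congr_ae hcongr, lintegral_add_right _ measurable_const,
      lintegral_const_mul' _ _ ENNReal.ofReal_ne_top, hFp, lintegral_const, measure_univ,
      mul_one, mul_one, ← ENNReal.ofReal_add ht0.le (by linarith)]
    norm_num
  have hdpos : 0 < ∫⁻ ω, d ω ∂P := by
    rw [lintegral_pos_iff_support hdm]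
    have hS : MeasurableSet {ω | X ω = 1} := hX_meas (measurableSet_singleton 1)
    have hcompl : P ({ω | X ω = 1}ᶜ) = 1 - P {ω | X ω = 1} := by
      rw [measure_compl hS (measure_ne_top P _), measure_univ]
    have hSpos : 0 < P ({ω | X ω = 1}ᶜ) := by
      rw [hcompl]; exact tsub_pos_iff_lt.mpr hX_ne_one
    have hN : P {ω | ¬ 0 < X ω} = 0 := by
      rw [← compl_setOf] at *
      exact (ae_iff.mp hX_pos)
    have hdiff : P ({ω | X ω = 1}ᶜ \ {ω | ¬ 0 < X ω}) = P ({ω | X ω = 1}ᶜ) :=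
      measure_diff_null hN
    have hsubset : {ω | X ω = 1}ᶜ \ {ω | ¬ 0 < X ω} ⊆ Function.support d := by
      intro ω hω
      obtain ⟨hne, hposω⟩ := hω
      have hxω : 0 < X ω := not_not.mp hposω
      have hxne : X ω ≠ 1 := hne
      have ha1 : p + (1-p)*X ω ≠ 1 := by
        intro h
        apply hxne
        nlinarith
      have hstrict : 1/(q+(1-q)*X ω) < t*(1/(p+(1-p)*X ω))+(1-t) := by
        rw [← hsub (X ω)]
        exact tok_core t _ ht0 ht1 (hden (X ω) hxω) ha1
      simp only [Function.mem_support, hd_def]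
      exact (ENNReal.ofReal_pos.mpr (by linarith)).ne'
    calc 0 < P ({ω | X ω = 1}ᶜ) := hSpos
      _ = P ({ω | X ω = 1}ᶜ \ {ω | ¬ 0 < X ω}) := hdiff.symm
      _ ≤ P (Function.support d) := measure_mono hsubset
  have hle1 : (∫⁻ ω, f ω ∂P) ≤ 1 := le_of_le_of_eq (self_le_add_right _ _) hsum
  rcases lt_or_eq_of_le hle1 with h|h
  · exact h
  · exfalso
    rw [h] at hsum
    have : (∫⁻ ω, d ω ∂P) = 0 := by
      have := hsum
      rwa [← add_zero (1:ℝ≥0∞), add_assoc, zero_add, ENNReal.add_right_inj ENNReal.one_ne_top] at this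
    exact absurd this (ne_of_gt hdpos)

lemma tok_ident (x q : ℝ) (hx : 0 < x) (hq0 : 0 ≤ q) (hq1 : q < 1) :
    ENNReal.ofReal (1/(q+(1-q)*x)) + ENNReal.ofReal (1-q) * ENNReal.ofReal ((x-1)/(q+(1-q)*x))
      = 1 + ENNReal.ofReal (1-q) * ENNReal.ofReal ((1-x)/(q+(1-q)*x)) := by
  have hd : 0 < q+(1-q)*x := by nlinarith
  rw [← ENNReal.ofReal_mul (by linarith), ← ENNReal.ofReal_mul (by linarith),
    ← ENNReal.ofReal_one]
  rcases le_total x 1 with h|h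
  · rw [(by
      apply ENNReal.ofReal_eq_zero.mpr
      apply mul_nonpos_of_nonneg_of_nonpos (by linarith)
      exact div_nonpos_of_nonpos_of_nonneg (by linarith) hd.le :
        ENNReal.ofReal ((1-q) * ((x-1)/(q+(1-q)*x))) = 0), add_zero,
      ← ENNReal.ofReal_add (by norm_num) (by
        apply mul_nonneg (by linarith)
        exact div_nonneg (by linarith) hd.le)]
    congr 1
    field_simp
    ring
  · rw [(by
      apply ENNReal.ofReal_eq_zero.mpr
      apply mul_nonpos_of_nonneg_of_nonpos (by linarith)
      exact div_nonpos_of_nonpos_of_nonneg (by linarith) hd.le :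
        ENNReal.ofReal ((1-q) * ((1-x)/(q+(1-q)*x))) = 0), add_zero,
      ← ENNReal.ofReal_add (by positivity) (by
        apply mul_nonneg (by linarith)
        exact div_nonneg (by linarith) hd.le)]
    congr 1
    field_simp
    ring

lemma tok_identity {Ω : Type*} {𝒜 : MeasurableSpace Ω} (P : @Measure Ω 𝒜)
    [IsProbabilityMeasure P]
    (X : Ω → ℝ) (hX_meas : Measurable X) (hX_pos : ∀ᵐ ω ∂P, 0 < X ω)
    {q : ℝ} (hq0 : 0 ≤ q) (hq1 : q < 1) :
    (∫⁻ ω, ENNReal.ofReal (1/(q+(1-q)*X ω)) ∂P)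
      + ENNReal.ofReal (1-q) * ∫⁻ ω, ENNReal.ofReal ((X ω - 1)/(q+(1-q)*X ω)) ∂P
    = 1 + ENNReal.ofReal (1-q) * ∫⁻ ω, ENNReal.ofReal ((1 - X ω)/(q+(1-q)*X ω)) ∂P := by
  rw [← lintegral_const_mul' _ _ ENNReal.ofReal_ne_top,
    ← lintegral_const_mul' _ _ ENNReal.ofReal_ne_top,
    ← lintegral_add_left (by fun_prop : Measurable fun ω => ENNReal.ofReal (1/(q+(1-q)*X ω))),
    (by rw [lintegral_one, measure_univ] : (1:ℝ≥0∞) = ∫⁻ _, 1 ∂P),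
    ← lintegral_add_left measurable_const]
  apply lintegral_congr_ae
  filter_upwards [hX_pos] with ω hω
  exact tok_ident (X ω) q hω hq0 hq1

lemma tok_inv_ge {Ω : Type*} {𝒜 : MeasurableSpace Ω} (P : @Measure Ω 𝒜)
    [IsProbabilityMeasure P]
    (X : Ω → ℝ) (hX_meas : Measurable X) (hX_pos : ∀ᵐ ω ∂P, 0 < X ω)
    {p : ℝ} (hp0 : 0 ≤ p) (hp1 : p < 1)
    (hFp : ∫⁻ ω, ENNReal.ofReal (1 / (p + (1 - p) * X ω)) ∂P = 1) :
    1 ≤ ∫⁻ ω, ENNReal.ofReal (X ω)⁻¹ ∂P := by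
  by_contra hcon
  push_neg at hcon
  have hI_lt : (∫⁻ ω, ENNReal.ofReal (X ω)⁻¹ ∂P) < 1 := hcon
  have hpt : ∀ᵐ ω ∂P, ENNReal.ofReal (1/(p+(1-p)*X ω))
      ≤ ENNReal.ofReal (1-p) * ENNReal.ofReal (X ω)⁻¹ + ENNReal.ofReal p := by
    filter_upwards [hX_pos] with ω hω
    have h1 : 1/(p+(1-p)*X ω) ≤ (1-p)*(1/X ω) + p := by
      have := tok_core_le (1-p) (X ω) (by linarith) (by linarith) hω
      calc 1/(p+(1-p)*X ω) = 1/((1-p)*X ω + (1-(1-p))) := by ring_nf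
        _ ≤ (1-p)*(1/X ω) + (1-(1-p)) := this
        _ = (1-p)*(1/X ω) + p := by ring
    calc ENNReal.ofReal (1/(p+(1-p)*X ω)) ≤ ENNReal.ofReal ((1-p)*(1/X ω) + p) :=
          ENNReal.ofReal_le_ofReal h1
      _ = ENNReal.ofReal (1-p) * ENNReal.ofReal (X ω)⁻¹ + ENNReal.ofReal p := by
          rw [ENNReal.ofReal_add (mul_nonneg (by linarith) (one_div_nonneg.mpr hω.le)) hp0, ENNReal.ofReal_mul (by linarith), one_div]
  have hmain : (1:ℝ≥0∞) ≤ ENNReal.ofReal (1-p) * (∫⁻ ω, ENNReal.ofReal (X ω)⁻¹ ∂P)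
      + ENNReal.ofReal p := by
    rw [← hFp]
    calc ∫⁻ ω, ENNReal.ofReal (1/(p+(1-p)*X ω)) ∂P
        ≤ ∫⁻ ω, (ENNReal.ofReal (1-p) * ENNReal.ofReal (X ω)⁻¹ + ENNReal.ofReal p) ∂P :=
          lintegral_mono_ae hpt
      _ = ENNReal.ofReal (1-p) * (∫⁻ ω, ENNReal.ofReal (X ω)⁻¹ ∂P) + ENNReal.ofReal p := by
          rw [lintegral_add_right _ measurable_const, lintegral_const_mul' _ _
            ENNReal.ofReal_ne_top, lintegral_const, measure_univ, mul_one]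
  have hlt : ENNReal.ofReal (1-p) * (∫⁻ ω, ENNReal.ofReal (X ω)⁻¹ ∂P) + ENNReal.ofReal p
      < 1 := by
    calc ENNReal.ofReal (1-p) * (∫⁻ ω, ENNReal.ofReal (X ω)⁻¹ ∂P) + ENNReal.ofReal p
        < ENNReal.ofReal (1-p) * 1 + ENNReal.ofReal p := by
          rw [ENNReal.add_lt_add_iff_right ENNReal.ofReal_ne_top]
          exact (ENNReal.mul_lt_mul_iff_right (by simp; linarith) ENNReal.ofReal_ne_top).mpr hI_lt
      _ = 1 := by
          rw [mul_one, ← ENNReal.ofReal_add (by linarith) hp0]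
          norm_num
  exact absurd (lt_of_le_of_lt hmain hlt) (lt_irrefl _)

lemma tok_EX_rel {Ω : Type*} {𝒜 : MeasurableSpace Ω} (P : @Measure Ω 𝒜)
    [IsProbabilityMeasure P]
    (X : Ω → ℝ) (hX_meas : Measurable X) (hX_pos : ∀ᵐ ω ∂P, 0 < X ω) :
    (∫⁻ ω, ENNReal.ofReal (X ω) ∂P) + ∫⁻ ω, ENNReal.ofReal (1 - X ω) ∂P
      = 1 + ∫⁻ ω, ENNReal.ofReal (X ω - 1) ∂P := by
  rw [← lintegral_add_left (by fun_prop : Measurable fun ω => ENNReal.ofReal (X ω)),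
    (by rw [lintegral_one, measure_univ] : (1:ℝ≥0∞) = ∫⁻ _, 1 ∂P),
    ← lintegral_add_left measurable_const]
  apply lintegral_congr_ae
  filter_upwards [hX_pos] with ω hω
  rcases le_total (X ω) 1 with h|h
  · rw [(by simpa using (by linarith : X ω - 1 ≤ 0) : ENNReal.ofReal (X ω - 1) = 0), add_zero,
      ← ENNReal.ofReal_one, ← ENNReal.ofReal_add hω.le (by linarith)]
    norm_num
  · rw [(by simpa using (by linarith : 1 - X ω ≤ 0) : ENNReal.ofReal (1 - X ω) = 0), add_zero,
      ← ENNReal.ofReal_one, ← ENNReal.ofReal_add (by norm_num) (by linarith)]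
    norm_num

lemma tok_C_le_one {Ω : Type*} {𝒜 : MeasurableSpace Ω} (P : @Measure Ω 𝒜)
    [IsProbabilityMeasure P] (X : Ω → ℝ) (hX_pos : ∀ᵐ ω ∂P, 0 < X ω) :
    (∫⁻ ω, ENNReal.ofReal (1 - X ω) ∂P) ≤ 1 := by
  calc (∫⁻ ω, ENNReal.ofReal (1 - X ω) ∂P) ≤ ∫⁻ _, 1 ∂P := by
        apply lintegral_mono_ae
        filter_upwards [hX_pos] with ω hω
        rw [← ENNReal.ofReal_one]
        exact ENNReal.ofReal_le_ofReal (by linarith)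
    _ = 1 := by rw [lintegral_one, measure_univ]

lemma tok_EX_gt_iff {Ω : Type*} {𝒜 : MeasurableSpace Ω} (P : @Measure Ω 𝒜)
    [IsProbabilityMeasure P]
    (X : Ω → ℝ) (hX_meas : Measurable X) (hX_pos : ∀ᵐ ω ∂P, 0 < X ω) :
    (1 < ∫⁻ ω, ENNReal.ofReal (X ω) ∂P ↔
      (∫⁻ ω, ENNReal.ofReal (1 - X ω) ∂P) < ∫⁻ ω, ENNReal.ofReal (X ω - 1) ∂P) := by
  have hrel := tok_EX_rel P X hX_meas hX_pos
  have hC : (∫⁻ ω, ENNReal.ofReal (1 - X ω) ∂P) ≠ ∞ :=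
    ne_top_of_le_ne_top ENNReal.one_ne_top (tok_C_le_one P X hX_pos)
  constructor
  · intro h
    by_contra hcon
    push_neg at hcon
    have : (∫⁻ ω, ENNReal.ofReal (X ω) ∂P) + (∫⁻ ω, ENNReal.ofReal (1 - X ω) ∂P)
        ≤ 1 + ∫⁻ ω, ENNReal.ofReal (1 - X ω) ∂P := by
      rw [hrel]; exact add_le_add_right hcon 1
    rw [ENNReal.add_le_add_iff_right hC] at this
    exact absurd h (not_lt.mpr this)
  · intro h
    have : 1 + (∫⁻ ω, ENNReal.ofReal (1 - X ω) ∂P)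
        < (∫⁻ ω, ENNReal.ofReal (X ω) ∂P) + ∫⁻ ω, ENNReal.ofReal (1 - X ω) ∂P := by
      rw [hrel]; exact ENNReal.add_lt_add_left ENNReal.one_ne_top h
    rwa [ENNReal.add_lt_add_iff_right hC] at this

lemma tok_B_le {Ω : Type*} {𝒜 : MeasurableSpace Ω} (P : @Measure Ω 𝒜)
    [IsProbabilityMeasure P]
    (X : Ω → ℝ) (hX_pos : ∀ᵐ ω ∂P, 0 < X ω) {q : ℝ} (hq0 : 0 ≤ q) (hq1 : q < 1) :
    (∫⁻ ω, ENNReal.ofReal ((X ω - 1)/(q+(1-q)*X ω)) ∂P) ≤ ∫⁻ ω, ENNReal.ofReal (X ω - 1) ∂P := by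
  apply lintegral_mono_ae
  filter_upwards [hX_pos] with ω hω
  rcases le_total (X ω) 1 with h|h
  · rw [ENNReal.ofReal_eq_zero.mpr
      (div_nonpos_of_nonpos_of_nonneg (by linarith) (by nlinarith))]
    exact zero_le
  · exact ENNReal.ofReal_le_ofReal (div_le_self (by linarith) (by nlinarith))

lemma tok_C_ge {Ω : Type*} {𝒜 : MeasurableSpace Ω} (P : @Measure Ω 𝒜)
    [IsProbabilityMeasure P]
    (X : Ω → ℝ) (hX_pos : ∀ᵐ ω ∂P, 0 < X ω) {q : ℝ} (hq0 : 0 ≤ q) (hq1 : q < 1) :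
    (∫⁻ ω, ENNReal.ofReal (1 - X ω) ∂P) ≤ ∫⁻ ω, ENNReal.ofReal ((1 - X ω)/(q+(1-q)*X ω)) ∂P := by
  apply lintegral_mono_ae
  filter_upwards [hX_pos] with ω hω
  apply ENNReal.ofReal_le_ofReal
  have hd : 0 < q+(1-q)*X ω := by nlinarith
  rw [le_div_iff₀ hd]
  nlinarith [mul_nonneg (by linarith : (0:ℝ) ≤ 1-q) (sq_nonneg (1 - X ω))]

lemma tok_Cq_fin {Ω : Type*} {𝒜 : MeasurableSpace Ω} (P : @Measure Ω 𝒜)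
    [IsProbabilityMeasure P]
    (X : Ω → ℝ) (hX_pos : ∀ᵐ ω ∂P, 0 < X ω) {q : ℝ} (hq0 : 0 < q) (hq1 : q < 1) :
    (∫⁻ ω, ENNReal.ofReal ((1 - X ω)/(q+(1-q)*X ω)) ∂P) ≠ ∞ := by
  apply ne_top_of_le_ne_top (b := ENNReal.ofReal (1/q)) ENNReal.ofReal_ne_top
  calc (∫⁻ ω, ENNReal.ofReal ((1 - X ω)/(q+(1-q)*X ω)) ∂P)
      ≤ ∫⁻ _, ENNReal.ofReal (1/q) ∂P := by
        apply lintegral_mono_ae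
        filter_upwards [hX_pos] with ω hω
        have hd : q ≤ q+(1-q)*X ω := by nlinarith
        rcases le_total (X ω) 1 with h|h
        · exact ENNReal.ofReal_le_ofReal
            (div_le_div₀ (by norm_num) (by linarith) hq0 hd)
        · rw [ENNReal.ofReal_eq_zero.mpr
            (div_nonpos_of_nonpos_of_nonneg (by linarith) (by linarith))]
          exact zero_le
    _ = ENNReal.ofReal (1/q) := by rw [lintegral_const, measure_univ, mul_one]

lemma tok_EX_gt {Ω : Type*} {𝒜 : MeasurableSpace Ω} (P : @Measure Ω 𝒜)
    [IsProbabilityMeasure P]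
    (X : Ω → ℝ) (hX_meas : Measurable X) (hX_pos : ∀ᵐ ω ∂P, 0 < X ω)
    (hX_ne_one : P {ω | X ω = 1} < 1)
    {p : ℝ} (hp0 : 0 ≤ p) (hp1 : p < 1)
    (hFp : ∫⁻ ω, ENNReal.ofReal (1 / (p + (1 - p) * X ω)) ∂P = 1) :
    1 < ∫⁻ ω, ENNReal.ofReal (X ω) ∂P := by
  set q : ℝ := (p+1)/2 with hq_def
  have hq0 : 0 < q := by rw [hq_def]; linarith
  have hpq : p < q := by rw [hq_def]; linarith
  have hq1 : q < 1 := by rw [hq_def]; linarith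
  have hFq : ∫⁻ ω, ENNReal.ofReal (1 / (q + (1 - q) * X ω)) ∂P < 1 :=
    tok_lt_one P X hX_meas hX_pos hX_ne_one hp0 hpq hq1 hFp
  have hid := tok_identity P X hX_meas hX_pos hq0.le hq1
  set c : ℝ≥0∞ := ENNReal.ofReal (1-q) with hc_def
  set Bq := ∫⁻ ω, ENNReal.ofReal ((X ω - 1)/(q+(1-q)*X ω)) ∂P with hBq_def
  set Cq := ∫⁻ ω, ENNReal.ofReal ((1 - X ω)/(q+(1-q)*X ω)) ∂P with hCq_def
  have hCq_fin : Cq ≠ ∞ := tok_Cq_fin P X hX_pos hq0 hq1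
  have hcC_fin : c * Cq ≠ ∞ := ENNReal.mul_ne_top ENNReal.ofReal_ne_top hCq_fin
  have hBC : Cq < Bq := by
    by_contra hcon
    push_neg at hcon
    have h1 : (∫⁻ ω, ENNReal.ofReal (1 / (q + (1 - q) * X ω)) ∂P) + c * Bq
        ≤ (∫⁻ ω, ENNReal.ofReal (1 / (q + (1 - q) * X ω)) ∂P) + c * Cq :=
      add_le_add_right (mul_le_mul_right hcon c) _
    have h2 : (∫⁻ ω, ENNReal.ofReal (1 / (q + (1 - q) * X ω)) ∂P) + c * Cq < 1 + c * Cq :=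
      (ENNReal.add_lt_add_iff_right hcC_fin).mpr hFq
    have h3 : (1:ℝ≥0∞) + c * Cq < 1 + c * Cq := by
      calc (1:ℝ≥0∞) + c * Cq
          = (∫⁻ ω, ENNReal.ofReal (1 / (q + (1 - q) * X ω)) ∂P) + c * Bq := by
            rw [← hid]
        _ ≤ _ := h1
        _ < _ := h2
    exact absurd h3 (lt_irrefl _)
  apply (tok_EX_gt_iff P X hX_meas hX_pos).mpr
  calc (∫⁻ ω, ENNReal.ofReal (1 - X ω) ∂P) ≤ Cq := tok_C_ge P X hX_pos hq0.le hq1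
    _ < Bq := hBC
    _ ≤ _ := tok_B_le P X hX_pos hq0.le hq1

lemma tok_fatou {Ω : Type*} {𝒜 : MeasurableSpace Ω} (P : @Measure Ω 𝒜)
    [IsProbabilityMeasure P]
    (X : Ω → ℝ) (hX_meas : Measurable X) (hX_pos : ∀ᵐ ω ∂P, 0 < X ω)
    (hI : 1 < ∫⁻ ω, ENNReal.ofReal (X ω)⁻¹ ∂P) {b : ℝ} (hb0 : 0 < b) :
    ∃ a, 0 < a ∧ a < b ∧ 1 < ∫⁻ ω, ENNReal.ofReal (1 / (a + (1 - a) * X ω)) ∂P := by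
  set pn : ℕ → ℝ := fun n => b / (n+2) with hpn_def
  have hpn_pos : ∀ n, 0 < pn n := fun n => div_pos hb0 (by positivity)
  have hpn_lt : ∀ n, pn n < b := by
    intro n
    rw [hpn_def]
    rw [div_lt_iff₀ (by positivity)]
    nlinarith [Nat.cast_nonneg (α := ℝ) n]
  have hpn_tend : Filter.Tendsto pn Filter.atTop (nhds 0) := by
    rw [hpn_def]
    apply Filter.Tendsto.div_atTop tendsto_const_nhds
    exact Filter.tendsto_atTop_add_const_right _ 2 tendsto_natCast_atTop_atTop
  have hliminf : (∫⁻ ω, ENNReal.ofReal (X ω)⁻¹ ∂P)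
      ≤ Filter.liminf (fun n => ∫⁻ ω, ENNReal.ofReal (1 / (pn n + (1 - pn n) * X ω)) ∂P)
        Filter.atTop := by
    have := lintegral_liminf_le
      (f := fun n ω => ENNReal.ofReal (1 / (pn n + (1 - pn n) * X ω))) (μ := P) (u := Filter.atTop)
      (fun n => by fun_prop)
    refine le_trans (le_of_eq ?_) this
    apply lintegral_congr_ae
    filter_upwards [hX_pos] with ω hω
    have htend : Filter.Tendsto (fun n => ENNReal.ofReal (1 / (pn n + (1 - pn n) * X ω)))
        Filter.atTop (nhds (ENNReal.ofReal (X ω)⁻¹)) := by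
      apply ENNReal.tendsto_ofReal
      have hden : Filter.Tendsto (fun n => pn n + (1 - pn n) * X ω) Filter.atTop
          (nhds (X ω)) := by
        have := (hpn_tend.add (((tendsto_const_nhds (x := (1:ℝ))).sub hpn_tend).mul
          (tendsto_const_nhds (x := X ω))))
        simpa using this
      have := hden.inv₀ hω.ne'
      simpa [one_div] using this
    exact (htend.liminf_eq).symm
  have hev : ∃ n, 1 < ∫⁻ ω, ENNReal.ofReal (1 / (pn n + (1 - pn n) * X ω)) ∂P := by
    have := Filter.eventually_lt_of_lt_liminf (lt_of_lt_of_le hI hliminf)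
    exact this.exists
  obtain ⟨n, hn⟩ := hev
  exact ⟨pn n, hpn_pos n, hpn_lt n, hn⟩

lemma tok_ivt {Ω : Type*} {𝒜 : MeasurableSpace Ω} (P : @Measure Ω 𝒜)
    [IsProbabilityMeasure P]
    (X : Ω → ℝ) (hX_meas : Measurable X) (hX_pos : ∀ᵐ ω ∂P, 0 < X ω)
    {a b : ℝ} (ha0 : 0 < a) (hab : a < b) (hb1 : b < 1)
    (hFa : 1 < ∫⁻ ω, ENNReal.ofReal (1 / (a + (1 - a) * X ω)) ∂P)
    (hFb : (∫⁻ ω, ENNReal.ofReal (1 / (b + (1 - b) * X ω)) ∂P) < 1) :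
    ∃ p ∈ Set.Ico (0:ℝ) 1, ∫⁻ ω, ENNReal.ofReal (1 / (p + (1 - p) * X ω)) ∂P = 1 := by
  set G : ℝ → ℝ := fun p => ∫ ω, 1 / (p + (1 - p) * X ω) ∂P with hG_def
  have hbound : ∀ p, a ≤ p → p < 1 → ∀ᵐ ω ∂P, ‖1 / (p + (1 - p) * X ω)‖ ≤ 1/a := by
    intro p hap hp1
    filter_upwards [hX_pos] with ω hω
    have hd : a ≤ p + (1 - p) * X ω := by nlinarith
    have hd0 : 0 < p + (1 - p) * X ω := lt_of_lt_of_le ha0 hd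
    rw [Real.norm_eq_abs, abs_of_nonneg (by positivity)]
    exact div_le_div₀ (by norm_num) (le_refl 1) ha0 hd
  have hInt : ∀ p, a ≤ p → p < 1 → Integrable (fun ω => 1 / (p + (1 - p) * X ω)) P := by
    intro p hap hp1
    exact (integrable_const (1/a)).mono'
      ((by fun_prop : Measurable fun ω => 1 / (p + (1 - p) * X ω)).aestronglyMeasurable)
      (hbound p hap hp1)
  have hFG : ∀ p, a ≤ p → p < 1 →
      (∫⁻ ω, ENNReal.ofReal (1 / (p + (1 - p) * X ω)) ∂P) = ENNReal.ofReal (G p) := by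
    intro p hap hp1
    rw [hG_def]
    rw [MeasureTheory.ofReal_integral_eq_lintegral_ofReal (hInt p hap hp1) ?_]
    filter_upwards [hX_pos] with ω hω
    have : 0 < p + (1 - p) * X ω := by nlinarith
    positivity
  have hcont : ContinuousOn G (Icc a b) := by
    intro p hp
    apply ContinuousAt.continuousWithinAt
    apply MeasureTheory.continuousAt_of_dominated (bound := fun _ => 2/a)
    · exact Filter.Eventually.of_forall (fun p' =>
        (by fun_prop : Measurable fun ω => 1 / (p' + (1 - p') * X ω)).aestronglyMeasurable)
    · have hmem : Ioo (a/2) 1 ∈ nhds p := Ioo_mem_nhds (by linarith [hp.1]) (by linarith [hp.2])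
      filter_upwards [hmem] with p' hp'
      filter_upwards [hX_pos] with ω hω
      have hd : a/2 ≤ p' + (1 - p') * X ω := by nlinarith [hp'.1, hp'.2]
      have hd0 : 0 < p' + (1 - p') * X ω := lt_of_lt_of_le (by linarith) hd
      rw [Real.norm_eq_abs, abs_of_nonneg (by positivity)]
      calc 1 / (p' + (1 - p') * X ω) ≤ 1 / (a/2) :=
            div_le_div₀ (by norm_num) (le_refl 1) (by linarith) hd
        _ = 2/a := by rw [div_div_eq_mul_div]; ring
    · exact integrable_const _
    · filter_upwards [hX_pos] with ω hω
      have hdp : 0 < p + (1 - p) * X ω := by nlinarith [hp.1, hp.2]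
      apply ContinuousAt.div continuousAt_const
      · exact (continuousAt_id.add ((continuousAt_const.sub continuousAt_id).mul
          continuousAt_const))
      · exact hdp.ne'
  have hGa : 1 < G a := by
    rw [hFG a (le_refl a) (by linarith)] at hFa
    exact ENNReal.one_lt_ofReal.mp hFa
  have hGb : G b < 1 := by
    rw [hFG b hab.le hb1] at hFb
    exact ENNReal.ofReal_lt_one.mp hFb
  have hsub := intermediate_value_Icc' hab.le hcont
  have h1mem : (1:ℝ) ∈ Icc (G b) (G a) := ⟨hGb.le, hGa.le⟩
  obtain ⟨p, hpmem, hGp⟩ := hsub h1mem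
  refine ⟨p, ⟨by linarith [hpmem.1], by linarith [hpmem.2]⟩, ?_⟩
  rw [hFG p hpmem.1 (by linarith [hpmem.2]), hGp, ENNReal.ofReal_one]

lemma tok_small {Ω : Type*} {𝒜 : MeasurableSpace Ω} (P : @Measure Ω 𝒜)
    [IsProbabilityMeasure P]
    (X : Ω → ℝ) (hX_meas : Measurable X) (hX_pos : ∀ᵐ ω ∂P, 0 < X ω)
    (hEX : 1 < ∫⁻ ω, ENNReal.ofReal (X ω) ∂P) :
    ∃ q, 0 < q ∧ q < 1 ∧ (∫⁻ ω, ENNReal.ofReal (1 / (q + (1 - q) * X ω)) ∂P) < 1 := by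
  have hBC := (tok_EX_gt_iff P X hX_meas hX_pos).mp hEX
  obtain ⟨r, hrC, hrB⟩ := exists_between hBC
  set qn : ℕ → ℝ := fun n => 1 - 1/(n+2) with hqn_def
  have hcast : ∀ n : ℕ, (2:ℝ) ≤ (n:ℝ) + 2 := fun n => by
    nlinarith [Nat.cast_nonneg (α := ℝ) n]
  have hqn_half : ∀ n, 1/2 ≤ qn n := by
    intro n
    have h1 : (1:ℝ)/((n:ℝ)+2) ≤ 1/2 := by
      apply div_le_div₀ (by norm_num) (le_refl 1) (by norm_num) (hcast n)
    rw [hqn_def]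
    simp only
    linarith
  have hqn_pos : ∀ n, 0 < qn n := fun n => lt_of_lt_of_le (by norm_num) (hqn_half n)
  have hqn_lt1 : ∀ n, qn n < 1 := by
    intro n
    rw [hqn_def]
    simp only
    have : (0:ℝ) < 1/((n:ℝ)+2) := by positivity
    linarith
  have hqn_mono : Monotone qn := by
    intro n m hnm
    rw [hqn_def]
    simp only
    have : (1:ℝ)/((m:ℝ)+2) ≤ 1/((n:ℝ)+2) := by
      apply div_le_div₀ (by norm_num) (le_refl 1) (by positivity)
      have : (n:ℝ) ≤ (m:ℝ) := Nat.cast_le.mpr hnm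
      linarith
    linarith
  have hqn_tend : Filter.Tendsto qn Filter.atTop (nhds 1) := by
    have h0 : Filter.Tendsto (fun n : ℕ => 1/((n:ℝ)+2)) Filter.atTop (nhds 0) := by
      apply Filter.Tendsto.div_atTop tendsto_const_nhds
      exact Filter.tendsto_atTop_add_const_right _ 2 tendsto_natCast_atTop_atTop
    have := (tendsto_const_nhds (x := (1:ℝ))).sub h0
    rw [hqn_def]
    simpa [one_div] using this
  clear_value qn
  clear hqn_def hcast
  have hden_tend : ∀ x : ℝ, Filter.Tendsto (fun n => qn n + (1 - qn n) * x)
      Filter.atTop (nhds 1) := by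
    intro x
    have := hqn_tend.add (((tendsto_const_nhds (x := (1:ℝ))).sub hqn_tend).mul
      (tendsto_const_nhds (x := x)))
    simpa using this
  have hden_pos : ∀ n, ∀ x : ℝ, 0 < x → 0 < qn n + (1 - qn n) * x := by
    intro n x hx
    have h1 := hqn_pos n
    have h2 := hqn_lt1 n
    nlinarith
  have hmono_pt : ∀ ω, 0 < X ω →
      Monotone (fun n => ENNReal.ofReal ((X ω - 1)/(qn n + (1 - qn n) * X ω))) := by
    intro ω hω n m hnm
    dsimp only
    rcases le_total (X ω) 1 with h|h
    · rw [ENNReal.ofReal_eq_zero.mpr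
        (div_nonpos_of_nonpos_of_nonneg (by linarith : X ω - 1 ≤ 0) (hden_pos n _ hω).le)]
      exact zero_le
    · apply ENNReal.ofReal_le_ofReal
      rw [div_le_div_iff₀ (hden_pos n _ hω) (hden_pos m _ hω)]
      have hq := hqn_mono hnm
      nlinarith [sq_nonneg (X ω - 1), mul_nonneg (sub_nonneg.mpr hq) (sq_nonneg (X ω - 1))]
  have hBsup : (⨆ n, ∫⁻ ω, ENNReal.ofReal ((X ω - 1)/(qn n + (1 - qn n) * X ω)) ∂P)
      = ∫⁻ ω, ENNReal.ofReal (X ω - 1) ∂P := by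
    rw [← lintegral_iSup' (fun n => by fun_prop) (by
      filter_upwards [hX_pos] with ω hω
      exact hmono_pt ω hω)]
    apply lintegral_congr_ae
    filter_upwards [hX_pos] with ω hω
    have htend : Filter.Tendsto (fun n => ENNReal.ofReal ((X ω - 1)/(qn n + (1 - qn n) * X ω)))
        Filter.atTop (nhds (ENNReal.ofReal (X ω - 1))) := by
      apply ENNReal.tendsto_ofReal
      have := (tendsto_const_nhds (x := X ω - 1)).div (hden_tend (X ω)) one_ne_zero
      simpa [Pi.div_def] using this
    exact tendsto_nhds_unique (tendsto_atTop_iSup (hmono_pt ω hω)) htend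
  obtain ⟨n₀, hn₀⟩ := lt_iSup_iff.mp (by rw [hBsup]; exact hrB)
  have hCtend : Filter.Tendsto
      (fun n => ∫⁻ ω, ENNReal.ofReal ((1 - X ω)/(qn n + (1 - qn n) * X ω)) ∂P)
      Filter.atTop (nhds (∫⁻ ω, ENNReal.ofReal (1 - X ω) ∂P)) := by
    apply MeasureTheory.tendsto_lintegral_of_dominated_convergence (bound := fun _ => 2)
    · exact fun n => by fun_prop
    · intro n
      filter_upwards [hX_pos] with ω hω
      have hd : 1/2 ≤ qn n + (1 - qn n) * X ω := by
        have h1 := hqn_half n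
        have h2 := hqn_lt1 n
        nlinarith [mul_nonneg (by linarith : (0:ℝ) ≤ 1 - qn n) hω.le]
      calc ENNReal.ofReal ((1 - X ω)/(qn n + (1 - qn n) * X ω)) ≤ ENNReal.ofReal 2 := by
            apply ENNReal.ofReal_le_ofReal
            rw [div_le_iff₀ (hden_pos n _ hω)]
            nlinarith [hd, hω]
        _ = 2 := by norm_num
    · rw [lintegral_const, measure_univ, mul_one]
      norm_num
    · filter_upwards [hX_pos] with ω hω
      apply ENNReal.tendsto_ofReal
      have := (tendsto_const_nhds (x := 1 - X ω)).div (hden_tend (X ω)) one_ne_zero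
      simpa [Pi.div_def] using this
  obtain ⟨n, hCn, hn₀n⟩ := ((hCtend.eventually_lt_const hrC).and
    (Filter.eventually_ge_atTop n₀)).exists
  have hBn : r < ∫⁻ ω, ENNReal.ofReal ((X ω - 1)/(qn n + (1 - qn n) * X ω)) ∂P := by
    apply lt_of_lt_of_le hn₀
    apply lintegral_mono_ae
    filter_upwards [hX_pos] with ω hω
    exact hmono_pt ω hω hn₀n
  set q : ℝ := qn n with hq_def
  refine ⟨q, hqn_pos n, hqn_lt1 n, ?_⟩
  have hid := tok_identity P X hX_meas hX_pos (hqn_pos n).le (hqn_lt1 n)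
  set c : ℝ≥0∞ := ENNReal.ofReal (1-q) with hc_def
  set Bq := ∫⁻ ω, ENNReal.ofReal ((X ω - 1)/(q+(1-q)*X ω)) ∂P with hBq_def
  set Cq := ∫⁻ ω, ENNReal.ofReal ((1 - X ω)/(q+(1-q)*X ω)) ∂P with hCq_def
  have hCB : Cq < Bq := lt_trans hCn hBn
  have hCfin : Cq ≠ ∞ := tok_Cq_fin P X hX_pos (hqn_pos n) (hqn_lt1 n)
  have hc0 : c ≠ 0 := (ENNReal.ofReal_pos.mpr (by linarith [hqn_lt1 n])).ne'
  have hfin_rhs : (1:ℝ≥0∞) + c * Cq ≠ ∞ :=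
    ENNReal.add_ne_top.mpr ⟨ENNReal.one_ne_top, ENNReal.mul_ne_top ENNReal.ofReal_ne_top hCfin⟩
  have hcB_fin : c * Bq ≠ ∞ := by
    intro htop
    apply hfin_rhs
    rw [← hid, htop, add_top]
  have hlt : c * Cq < c * Bq := (ENNReal.mul_lt_mul_iff_right hc0 ENNReal.ofReal_ne_top).mpr hCB
  have hkey : (∫⁻ ω, ENNReal.ofReal (1/(q+(1-q)*X ω)) ∂P) + c * Bq < 1 + c * Bq := by
    rw [hid]
    exact ENNReal.add_lt_add_left ENNReal.one_ne_top hlt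
  exact (ENNReal.add_lt_add_iff_right hcB_fin).mp hkey

/-- **key lemma.** Let `X > 0` a.s. with `P[X = 1] < 1`. Then there exists
a solution `p ∈ [0,1)` to `E[1/(p + (1−p)·X)] = 1` if and only if `E[X] > 1` and
`E[X⁻¹] ≥ 1` (expectations possibly `+∞`). Any solution in `[0,1)` is unique, and the
unique solution is `p = 0` if and only if `E[X⁻¹] = 1`. -/
theorem total_odds_key_lemma
    {Ω : Type*} {𝒜 : MeasurableSpace Ω}
    (P : @Measure Ω 𝒜) [IsProbabilityMeasure P]
    (X : Ω → ℝ) (hX_meas : Measurable X) (hX_pos : ∀ᵐ ω ∂P, 0 < X ω)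
    (hX_ne_one : P {ω | X ω = 1} < 1) :
    ((∃ p ∈ Set.Ico (0:ℝ) 1,
        ∫⁻ ω, ENNReal.ofReal (1 / (p + (1 - p) * X ω)) ∂P = 1) ↔
      (1 < ∫⁻ ω, ENNReal.ofReal (X ω) ∂P ∧
        1 ≤ ∫⁻ ω, ENNReal.ofReal (X ω)⁻¹ ∂P)) ∧
    (∀ p ∈ Set.Ico (0:ℝ) 1, ∀ p' ∈ Set.Ico (0:ℝ) 1,
      ∫⁻ ω, ENNReal.ofReal (1 / (p + (1 - p) * X ω)) ∂P = 1 →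
      ∫⁻ ω, ENNReal.ofReal (1 / (p' + (1 - p') * X ω)) ∂P = 1 → p = p') ∧
    (∀ p ∈ Set.Ico (0:ℝ) 1,
      ∫⁻ ω, ENNReal.ofReal (1 / (p + (1 - p) * X ω)) ∂P = 1 →
      (p = 0 ↔ ∫⁻ ω, ENNReal.ofReal (X ω)⁻¹ ∂P = 1)) := by
  have hF0 : (∫⁻ ω, ENNReal.ofReal (1 / ((0:ℝ) + (1 - 0) * X ω)) ∂P)
      = ∫⁻ ω, ENNReal.ofReal (X ω)⁻¹ ∂P := by
    apply lintegral_congr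
    intro ω
    norm_num
  have huniq : ∀ p ∈ Set.Ico (0:ℝ) 1, ∀ p' ∈ Set.Ico (0:ℝ) 1,
      (∫⁻ ω, ENNReal.ofReal (1 / (p + (1 - p) * X ω)) ∂P = 1) →
      (∫⁻ ω, ENNReal.ofReal (1 / (p' + (1 - p') * X ω)) ∂P = 1) → p = p' := by
    intro p hp p' hp' h1 h2
    by_contra hne
    rcases lt_or_gt_of_ne hne with h|h
    · exact absurd h2 (ne_of_lt (tok_lt_one P X hX_meas hX_pos hX_ne_one hp.1 h hp'.2 h1))
    · exact absurd h1 (ne_of_lt (tok_lt_one P X hX_meas hX_pos hX_ne_one hp'.1 h hp.2 h2))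
  refine ⟨?_, huniq, ?_⟩
  · constructor
    · rintro ⟨p, hp, hFp⟩
      exact ⟨tok_EX_gt P X hX_meas hX_pos hX_ne_one hp.1 hp.2 hFp,
        tok_inv_ge P X hX_meas hX_pos hp.1 hp.2 hFp⟩
    · rintro ⟨hEX, hInv⟩
      rcases eq_or_lt_of_le hInv with hI|hI
      · exact ⟨0, ⟨le_refl 0, one_pos⟩, by rw [hF0]; exact hI.symm⟩
      · obtain ⟨b, hb0, hb1, hFb⟩ := tok_small P X hX_meas hX_pos hEX
        obtain ⟨a, ha0, hab, hFa⟩ := tok_fatou P X hX_meas hX_pos hI hb0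
        exact tok_ivt P X hX_meas hX_pos ha0 hab hb1 hFa hFb
  · intro p hp hFp
    constructor
    · intro hp0
      rw [hp0] at hFp
      rwa [hF0] at hFp
    · intro hI
      have h0 : (∫⁻ ω, ENNReal.ofReal (1 / ((0:ℝ) + (1 - 0) * X ω)) ∂P) = 1 := by
        rw [hF0]; exact hI
      exact huniq p hp 0 ⟨le_refl 0, one_pos⟩ hFp h0
end

section
/- Let X > 0 be a random variable with P[X = 1] < 1. Then the function F: (0,1) → ℝ, F(p) = E[1/(p + (1−p)·X)], is continuously differentiable and strictly convex on (0,1), with F(p) → E[X⁻¹] as p → 0 and F′(p) → E[X] − 1 as p → 1 (both limits possibly +∞). -/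
open MeasureTheory Set Filter
open scoped ENNReal

namespace F14

lemma dpos {p x : ℝ} (hp : 0 < p) (hp1 : p < 1) (hx : 0 < x) : 0 < p + (1 - p) * x := by
  have : 0 < (1 - p) * x := mul_pos (by linarith) hx
  linarith

lemma combo_pos {A B t : ℝ} (hA : 0 < A) (hB : 0 < B) (ht : 0 ≤ t) (ht1 : t ≤ 1) :
    0 < t * A + (1 - t) * B := by
  rcases eq_or_lt_of_le ht with h | h
  · simp [← h]; linarith
  · have h1 : 0 < t * A := mul_pos h hA
    have h2 : 0 ≤ (1 - t) * B := mul_nonneg (by linarith) hB.le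
    linarith

lemma inv_combo_le {A B t : ℝ} (hA : 0 < A) (hB : 0 < B) (ht : 0 ≤ t) (ht1 : t ≤ 1) :
    1 / (t * A + (1 - t) * B) ≤ t * (1 / A) + (1 - t) * (1 / B) := by
  have hD : 0 < t * A + (1 - t) * B := combo_pos hA hB ht ht1
  rw [div_le_iff₀ hD]
  have h1 : (t * (1 / A) + (1 - t) * (1 / B)) * (t * A + (1 - t) * B)
      = (t * B + (1 - t) * A) * (t * A + (1 - t) * B) / (A * B) := by
    field_simp
  rw [h1, le_div_iff₀ (mul_pos hA hB)]
  nlinarith [sq_nonneg (A - B), mul_nonneg ht (sub_nonneg.2 ht1)]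

lemma inv_combo_lt {A B t : ℝ} (hA : 0 < A) (hB : 0 < B) (hAB : A ≠ B)
    (ht : 0 < t) (ht1 : t < 1) :
    1 / (t * A + (1 - t) * B) < t * (1 / A) + (1 - t) * (1 / B) := by
  have hD : 0 < t * A + (1 - t) * B := combo_pos hA hB ht.le ht1.le
  rw [div_lt_iff₀ hD]
  have h1 : (t * (1 / A) + (1 - t) * (1 / B)) * (t * A + (1 - t) * B)
      = (t * B + (1 - t) * A) * (t * A + (1 - t) * B) / (A * B) := by
    field_simp
  have hAB2 : 0 < (A - B) ^ 2 :=
    lt_of_le_of_ne (sq_nonneg _) (Ne.symm (pow_ne_zero 2 (sub_ne_zero.mpr hAB)))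
  rw [h1, lt_div_iff₀ (mul_pos hA hB)]
  nlinarith [mul_pos (mul_pos ht (sub_pos.2 ht1)) hAB2]

lemma hasDerivAt_f {x : ℝ} (hx : 0 < x) {p : ℝ} (hp : 0 < p) (hp1 : p < 1) :
    HasDerivAt (fun q : ℝ => 1 / (q + (1 - q) * x)) ((x - 1) / (p + (1 - p) * x) ^ 2) p := by
  have h0 : HasDerivAt (fun q : ℝ => q + (1 - q) * x) (1 - x) p := by
    have := ((hasDerivAt_id p).const_sub 1).mul_const x
    exact ((hasDerivAt_id p).add this).congr_deriv (by ring)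
  have hne : p + (1 - p) * x ≠ 0 := (dpos hp hp1 hx).ne'
  have := h0.inv hne
  refine (this.congr_deriv (by ring)).congr_of_eventuallyEq (Eventually.of_forall fun q => ?_)
  simp [one_div]

lemma gbound {p a b x : ℝ} (ha : 0 < a) (hb : b < 1) (hap : a ≤ p) (hpb : p ≤ b) (hx : 0 < x) :
    |x - 1| / (p + (1 - p) * x) ^ 2 ≤ 1 / (a * (1 - b)) + 1 / a ^ 2 := by
  have hp : 0 < p := lt_of_lt_of_le ha hap
  have hp1 : p < 1 := lt_of_le_of_lt hpb hb
  have hd : 0 < p + (1 - p) * x := dpos hp hp1 hx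
  have hd2 : 0 < (p + (1 - p) * x) ^ 2 := by positivity
  have hda : a ≤ p + (1 - p) * x := by nlinarith [mul_nonneg (by linarith : (0:ℝ) ≤ 1 - p) hx.le]
  have hdb : (1 - b) * x ≤ p + (1 - p) * x := by nlinarith
  have h1 : x / (p + (1 - p) * x) ^ 2 ≤ 1 / (a * (1 - b)) := by
    rw [div_le_div_iff₀ hd2 (by nlinarith : (0:ℝ) < a * (1 - b))]
    have := mul_le_mul hda hdb (by nlinarith) hd.le
    nlinarith [this]
  have h2 : (1:ℝ) / (p + (1 - p) * x) ^ 2 ≤ 1 / a ^ 2 := by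
    apply one_div_le_one_div_of_le (by positivity)
    nlinarith [mul_le_mul hda hda ha.le hd.le]
  have h3 : |x - 1| ≤ x + 1 := by
    rw [abs_le]; constructor <;> linarith
  calc |x - 1| / (p + (1 - p) * x) ^ 2 ≤ (x + 1) / (p + (1 - p) * x) ^ 2 := by gcongr
    _ = x / (p + (1 - p) * x) ^ 2 + 1 / (p + (1 - p) * x) ^ 2 := by rw [add_div]
    _ ≤ 1 / (a * (1 - b)) + 1 / a ^ 2 := add_le_add h1 h2


variable {Ω : Type*} {𝒜 : MeasurableSpace Ω} {P : Measure Ω} [IsProbabilityMeasure P] {X : Ω → ℝ}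

lemma meas_f (hX : Measurable X) (p : ℝ) :
    Measurable fun ω => 1 / (p + (1 - p) * X ω) := by
  simp only [one_div]
  exact (measurable_const.add (hX.const_mul (1 - p))).inv

lemma meas_g (hX : Measurable X) (p : ℝ) :
    Measurable fun ω => (X ω - 1) / (p + (1 - p) * X ω) ^ 2 :=
  (hX.sub measurable_const).div ((measurable_const.add (hX.const_mul (1 - p))).pow_const 2)

lemma int_f (hX : Measurable X) (hpos : ∀ᵐ ω ∂P, 0 < X ω) {p : ℝ} (hp : 0 < p) (hp1 : p < 1) :
    Integrable (fun ω => 1 / (p + (1 - p) * X ω)) P := by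
  refine (integrable_const (1 / p)).mono' (meas_f hX p).aestronglyMeasurable ?_
  filter_upwards [hpos] with ω hω
  have hd : 0 < p + (1 - p) * X ω := dpos hp hp1 hω
  rw [Real.norm_eq_abs, abs_of_pos (by positivity)]
  apply one_div_le_one_div_of_le hp
  nlinarith [mul_nonneg (by linarith : (0:ℝ) ≤ 1 - p) hω.le]

lemma int_g (hX : Measurable X) (hpos : ∀ᵐ ω ∂P, 0 < X ω) {p : ℝ} (hp : 0 < p) (hp1 : p < 1) :
    Integrable (fun ω => (X ω - 1) / (p + (1 - p) * X ω) ^ 2) P := by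
  refine (integrable_const (1 / (p * (1 - p)) + 1 / p ^ 2)).mono'
    (meas_g hX p).aestronglyMeasurable ?_
  filter_upwards [hpos] with ω hω
  have hd2 : (0:ℝ) < (p + (1 - p) * X ω) ^ 2 := pow_pos (dpos hp hp1 hω) 2
  rw [Real.norm_eq_abs, abs_div, abs_of_pos hd2]
  exact gbound hp hp1 le_rfl le_rfl hω

lemma ball_bounds {p₀ : ℝ} (hp : 0 < p₀) (hp1 : p₀ < 1) :
    ∃ a b ε : ℝ, 0 < ε ∧ 0 < a ∧ b < 1 ∧
      ∀ q ∈ Metric.ball p₀ ε, a ≤ q ∧ q ≤ b := by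
  refine ⟨p₀ - min p₀ (1 - p₀) / 2, p₀ + min p₀ (1 - p₀) / 2, min p₀ (1 - p₀) / 2,
    by have h1 : (0:ℝ) < min p₀ (1 - p₀) := lt_min hp (by linarith); linarith, ?_, ?_, ?_⟩
  · have := min_le_left p₀ (1 - p₀); linarith
  · have := min_le_right p₀ (1 - p₀); linarith
  · intro q hq
    rw [Metric.mem_ball, Real.dist_eq, abs_sub_lt_iff] at hq
    constructor <;> linarith [hq.1, hq.2]

lemma hasDerivAt_integral (hX : Measurable X) (hpos : ∀ᵐ ω ∂P, 0 < X ω)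
    {p₀ : ℝ} (hp : 0 < p₀) (hp1 : p₀ < 1) :
    HasDerivAt (fun p => ∫ ω, 1 / (p + (1 - p) * X ω) ∂P)
      (∫ ω, (X ω - 1) / (p₀ + (1 - p₀) * X ω) ^ 2 ∂P) p₀ := by
  obtain ⟨a, b, ε, hε, ha, hb, hball⟩ := ball_bounds hp hp1
  have hab : ∀ q ∈ Metric.ball p₀ ε, 0 < q ∧ q < 1 := fun q hq =>
    ⟨lt_of_lt_of_le ha (hball q hq).1, lt_of_le_of_lt (hball q hq).2 hb⟩
  refine (hasDerivAt_integral_of_dominated_loc_of_deriv_le (μ := P)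
    (F := fun p ω => 1 / (p + (1 - p) * X ω))
    (F' := fun p ω => (X ω - 1) / (p + (1 - p) * X ω) ^ 2)
    (bound := fun _ => 1 / (a * (1 - b)) + 1 / a ^ 2) (Metric.ball_mem_nhds p₀ hε)
    (Eventually.of_forall fun q => (meas_f hX q).aestronglyMeasurable)
    (int_f hX hpos hp hp1) (meas_g hX p₀).aestronglyMeasurable ?_
    (integrable_const _) ?_).2
  · filter_upwards [hpos] with ω hω
    intro q hq
    have hd2 : (0:ℝ) < (q + (1 - q) * X ω) ^ 2 :=
      pow_pos (dpos (hab q hq).1 (hab q hq).2 hω) 2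
    rw [Real.norm_eq_abs, abs_div, abs_of_pos hd2]
    exact gbound ha hb (hball q hq).1 (hball q hq).2 hω
  · filter_upwards [hpos] with ω hω
    intro q hq
    exact hasDerivAt_f hω (hab q hq).1 (hab q hq).2

lemma continuousAt_integral_g (hX : Measurable X) (hpos : ∀ᵐ ω ∂P, 0 < X ω)
    {p₀ : ℝ} (hp : 0 < p₀) (hp1 : p₀ < 1) :
    ContinuousAt (fun p => ∫ ω, (X ω - 1) / (p + (1 - p) * X ω) ^ 2 ∂P) p₀ := by
  obtain ⟨a, b, ε, hε, ha, hb, hball⟩ := ball_bounds hp hp1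
  have hab : ∀ q ∈ Metric.ball p₀ ε, 0 < q ∧ q < 1 := fun q hq =>
    ⟨lt_of_lt_of_le ha (hball q hq).1, lt_of_le_of_lt (hball q hq).2 hb⟩
  refine continuousAt_of_dominated
    (Eventually.of_forall fun q => (meas_g hX q).aestronglyMeasurable) ?_
    (integrable_const (1 / (a * (1 - b)) + 1 / a ^ 2)) ?_
  · filter_upwards [Metric.ball_mem_nhds p₀ hε] with q hq
    filter_upwards [hpos] with ω hω
    have hd2 : (0:ℝ) < (q + (1 - q) * X ω) ^ 2 :=
      pow_pos (dpos (hab q hq).1 (hab q hq).2 hω) 2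
    rw [Real.norm_eq_abs, abs_div, abs_of_pos hd2]
    exact gbound ha hb (hball q hq).1 (hball q hq).2 hω
  · filter_upwards [hpos] with ω hω
    have hd : (p₀ + (1 - p₀) * X ω) ^ 2 ≠ 0 := (pow_pos (dpos hp hp1 hω) 2).ne'
    exact ContinuousAt.div continuousAt_const
      (((continuous_id.add ((continuous_const.sub continuous_id).mul continuous_const)).pow
        2).continuousAt) hd

lemma strictConvex_int (hX : Measurable X) (hpos : ∀ᵐ ω ∂P, 0 < X ω)
    (hne1 : P {ω | X ω = 1} < 1) :
    StrictConvexOn ℝ (Set.Ioo (0:ℝ) 1) (fun p => ∫ ω, 1 / (p + (1 - p) * X ω) ∂P) := by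
  refine ⟨convex_Ioo 0 1, ?_⟩
  intro p hp q hq hpq t u ht hu htu
  have hr : t • p + u • q ∈ Set.Ioo (0:ℝ) 1 := (convex_Ioo 0 1) hp hq ht.le hu.le htu
  simp only [smul_eq_mul] at hr ⊢
  have hu' : u = 1 - t := by linarith
  subst hu'
  set r := t * p + (1 - t) * q with hrdef
  set φ := fun ω => t * (1 / (p + (1 - p) * X ω)) + (1 - t) * (1 / (q + (1 - q) * X ω))
      - 1 / (r + (1 - r) * X ω) with hφdef
  have hAff : ∀ ω, r + (1 - r) * X ω
      = t * (p + (1 - p) * X ω) + (1 - t) * (q + (1 - q) * X ω) := by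
    intro ω; simp only [hrdef]; ring
  have key : ∀ ω, 0 < X ω → 0 ≤ φ ω := by
    intro ω hω
    have := inv_combo_le (dpos hp.1 hp.2 hω) (dpos hq.1 hq.2 hω) ht.le (by linarith)
    simp only [hφdef, sub_nonneg, hAff ω]
    exact this
  have keylt : ∀ ω, 0 < X ω → X ω ≠ 1 → 0 < φ ω := by
    intro ω hω hω1
    have hAB : p + (1 - p) * X ω ≠ q + (1 - q) * X ω := by
      intro h
      have : (p - q) * (1 - X ω) = 0 := by linarith [h]
      rcases mul_eq_zero.mp this with h' | h'
      · exact hpq (by linarith)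
      · exact hω1 (by linarith)
    have := inv_combo_lt (dpos hp.1 hp.2 hω) (dpos hq.1 hq.2 hω) hAB ht (by linarith)
    simp only [hφdef, sub_pos, hAff ω]
    exact this
  have hφint : Integrable φ P :=
    (((int_f hX hpos hp.1 hp.2).const_mul t).add
      ((int_f hX hpos hq.1 hq.2).const_mul (1 - t))).sub (int_f hX hpos hr.1 hr.2)
  have hφ0 : 0 ≤ᵐ[P] φ := hpos.mono fun ω hω => key ω hω
  have hSsub : {ω | 0 < X ω ∧ X ω ≠ 1} ⊆ Function.support φ := by
    intro ω hω
    exact (keylt ω hω.1 hω.2).ne'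
  have hS : 0 < P {ω | 0 < X ω ∧ X ω ≠ 1} := by
    rw [pos_iff_ne_zero]
    intro hS0
    have hcover : (Set.univ : Set Ω) ⊆
        {ω | 0 < X ω ∧ X ω ≠ 1} ∪ ({ω | X ω = 1} ∪ {ω | ¬ 0 < X ω}) := by
      intro ω _
      by_cases h1 : 0 < X ω
      · by_cases h2 : X ω = 1
        · exact Or.inr (Or.inl h2)
        · exact Or.inl ⟨h1, h2⟩
      · exact Or.inr (Or.inr h1)
    have hXz : P {ω | ¬ 0 < X ω} = 0 := ae_iff.mp hpos
    have h1 : (1:ENNReal) = P Set.univ := (measure_univ).symm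
    have hle : P Set.univ ≤ P {ω | 0 < X ω ∧ X ω ≠ 1} + (P {ω | X ω = 1} + P {ω | ¬ 0 < X ω}) :=
      le_trans (measure_mono hcover) (le_trans (measure_union_le _ _)
        (add_le_add le_rfl (measure_union_le _ _)))
    rw [hS0, hXz, zero_add, add_zero] at hle
    exact absurd (h1 ▸ hle) (not_le.mpr hne1)
  have hφpos : 0 < ∫ ω, φ ω ∂P := by
    rw [integral_pos_iff_support_of_nonneg_ae hφ0 hφint]
    exact lt_of_lt_of_le hS (measure_mono hSsub)
  have hsplit : ∫ ω, φ ω ∂P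
      = t * ∫ ω, 1 / (p + (1 - p) * X ω) ∂P + (1 - t) * ∫ ω, 1 / (q + (1 - q) * X ω) ∂P
        - ∫ ω, 1 / (r + (1 - r) * X ω) ∂P := by
    have hint1 : Integrable (fun ω => t * (1 / (p + (1 - p) * X ω))
        + (1 - t) * (1 / (q + (1 - q) * X ω))) P := by
      exact ((int_f hX hpos hp.1 hp.2).const_mul t).add
        ((int_f hX hpos hq.1 hq.2).const_mul (1 - t))
    have hint2 : Integrable (fun ω => t * (1 / (p + (1 - p) * X ω))) P := by
      exact (int_f hX hpos hp.1 hp.2).const_mul t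
    have hint3 : Integrable (fun ω => (1 - t) * (1 / (q + (1 - q) * X ω))) P := by
      exact (int_f hX hpos hq.1 hq.2).const_mul (1 - t)
    rw [integral_sub hint1 (int_f hX hpos hr.1 hr.2), integral_add hint2 hint3,
      integral_const_mul, integral_const_mul]
  rw [hsplit] at hφpos
  linarith

lemma neBot0 : (nhdsWithin (0:ℝ) (Set.Ioo (0:ℝ) 1)).NeBot := by
  apply mem_closure_iff_nhdsWithin_neBot.mp
  rw [closure_Ioo (by norm_num : (0:ℝ) ≠ 1)]
  exact ⟨le_refl 0, by norm_num⟩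

lemma neBot1 : (nhdsWithin (1:ℝ) (Set.Ioo (0:ℝ) 1)).NeBot := by
  apply mem_closure_iff_nhdsWithin_neBot.mp
  rw [closure_Ioo (by norm_num : (0:ℝ) ≠ 1)]
  exact ⟨by norm_num, le_refl 1⟩

lemma tendsto_zero (hX : Measurable X) (hpos : ∀ᵐ ω ∂P, 0 < X ω) :
    Tendsto (fun p => ∫⁻ ω, ENNReal.ofReal (1 / (p + (1 - p) * X ω)) ∂P)
      (nhdsWithin 0 (Set.Ioo (0:ℝ) 1)) (nhds (∫⁻ ω, ENNReal.ofReal (X ω)⁻¹ ∂P)) := by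
  haveI : (nhdsWithin (0:ℝ) (Set.Ioo (0:ℝ) 1)).NeBot := neBot0
  set l0 := nhdsWithin (0:ℝ) (Set.Ioo (0:ℝ) 1) with hl0
  set L := ∫⁻ ω, ENNReal.ofReal (X ω)⁻¹ ∂P with hL
  set G := fun p => ∫⁻ ω, ENNReal.ofReal (1 / (p + (1 - p) * X ω)) ∂P with hG
  refine tendsto_of_le_liminf_of_limsup_le ?_ ?_ (by isBoundedDefault) (by isBoundedDefault)
  · -- L ≤ liminf
    set g : ℕ → ℝ≥0∞ := fun n => ∫⁻ ω, ENNReal.ofReal ((1 / ((n:ℝ) + 1) + X ω)⁻¹) ∂P with hg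
    have hgt : Tendsto g atTop (nhds L) := by
      apply lintegral_tendsto_of_tendsto_of_monotone
      · intro n
        exact (ENNReal.measurable_ofReal.comp (measurable_const.add hX).inv).aemeasurable
      · filter_upwards [hpos] with ω hω
        intro n m hnm
        apply ENNReal.ofReal_le_ofReal
        have h1 : (0:ℝ) < 1 / ((m:ℝ) + 1) + X ω := by positivity
        apply inv_anti₀ h1
        have : 1 / ((m:ℝ) + 1) ≤ 1 / ((n:ℝ) + 1) := by
          apply one_div_le_one_div_of_le (by positivity)
          exact_mod_cast by linarith [(Nat.cast_le (α := ℝ)).2 hnm]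
        linarith
      · filter_upwards [hpos] with ω hω
        have h1 : Tendsto (fun n : ℕ => 1 / ((n:ℝ) + 1) + X ω) atTop (nhds (0 + X ω)) :=
          tendsto_one_div_add_atTop_nhds_zero_nat.add tendsto_const_nhds
        rw [zero_add] at h1
        exact ENNReal.tendsto_ofReal (h1.inv₀ hω.ne')
    refine le_of_tendsto hgt (Eventually.of_forall fun n => ?_)
    refine Filter.le_liminf_of_le (by isBoundedDefault) ?_
    have hev1 : ∀ᶠ p in l0, p < 1 / ((n:ℝ) + 1) :=
      eventually_nhdsWithin_of_eventually_nhds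
        (eventually_of_mem (Iio_mem_nhds (by positivity)) fun p hp => hp)
    filter_upwards [hev1, self_mem_nhdsWithin] with p hpn hp
    apply lintegral_mono_ae
    filter_upwards [hpos] with ω hω
    apply ENNReal.ofReal_le_ofReal
    rw [one_div (p + (1 - p) * X ω)]
    apply inv_anti₀ (dpos hp.1 hp.2 hω)
    have hpx : 0 ≤ p * X ω := mul_nonneg hp.1.le hω.le
    nlinarith
  · -- limsup ≤ L
    by_cases hLtop : L = ⊤
    · rw [hLtop]; exact le_top
    have hub : ∀ᶠ p in l0, G p ≤ ENNReal.ofReal (1 - p)⁻¹ * L := by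
      filter_upwards [self_mem_nhdsWithin] with p hp
      have hcalc : ∫⁻ ω, ENNReal.ofReal (1 - p)⁻¹ * ENNReal.ofReal (X ω)⁻¹ ∂P
          = ENNReal.ofReal (1 - p)⁻¹ * L := lintegral_const_mul' _ _ ENNReal.ofReal_ne_top
      rw [← hcalc]
      apply lintegral_mono_ae
      filter_upwards [hpos] with ω hω
      rw [← ENNReal.ofReal_mul (inv_nonneg.2 (by linarith [hp.2] : (0:ℝ) ≤ 1 - p))]
      apply ENNReal.ofReal_le_ofReal
      have hd : 0 < p + (1 - p) * X ω := dpos hp.1 hp.2 hω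
      have h2 : (0:ℝ) < (1 - p) * X ω := mul_pos (by linarith [hp.2]) hω
      rw [one_div]
      calc (p + (1 - p) * X ω)⁻¹ ≤ ((1 - p) * X ω)⁻¹ := by
            apply inv_anti₀ h2; linarith [hp.1]
        _ = (1 - p)⁻¹ * (X ω)⁻¹ := by rw [mul_inv]
    have htend : Tendsto (fun p => ENNReal.ofReal (1 - p)⁻¹ * L) l0 (nhds L) := by
      have h1 : Tendsto (fun p : ℝ => ENNReal.ofReal (1 - p)⁻¹) l0 (nhds 1) := by
        have h2 : Tendsto (fun p : ℝ => (1 - p)⁻¹) (nhds 0) (nhds 1) := by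
          have hc : ContinuousAt (fun p : ℝ => 1 - p) 0 :=
            (continuous_const.sub continuous_id).continuousAt
          have h4 := hc.inv₀ (by norm_num)
          unfold ContinuousAt at h4
          norm_num at h4
          exact h4
        have h2' : Tendsto (fun p : ℝ => (1 - p)⁻¹) l0 (nhds 1) :=
          h2.mono_left nhdsWithin_le_nhds
        have := ENNReal.tendsto_ofReal h2'
        simpa using this
      have h3 : Tendsto (fun p => ENNReal.ofReal (1 - p)⁻¹ * L) l0 (nhds (1 * L)) :=
        ENNReal.Tendsto.mul_const h1 (Or.inl (by norm_num : (1:ℝ≥0∞) ≠ 0))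
      simpa using h3
    exact le_trans (Filter.limsup_le_limsup hub) htend.limsup_eq.le

lemma hX_meas_set (hX : Measurable X) : MeasurableSet {ω | 1 ≤ X ω} :=
  hX measurableSet_Ici
lemma tendsto_one_compl (hX : Measurable X) (hpos : ∀ᵐ ω ∂P, 0 < X ω) :
    Tendsto (fun p => ∫ ω in {ω | 1 ≤ X ω}ᶜ, ((X ω - 1) / (p + (1 - p) * X ω) ^ 2 + 1) ∂P)
      (nhdsWithin 1 (Set.Ioo (0:ℝ) 1)) (nhds (∫ ω in {ω | 1 ≤ X ω}ᶜ, X ω ∂P)) := by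
  have hs : MeasurableSet {ω | 1 ≤ X ω} := hX_meas_set hX
  refine tendsto_integral_filter_of_dominated_convergence (μ := P.restrict {ω | 1 ≤ X ω}ᶜ)
    (fun _ => 5) (Eventually.of_forall fun p =>
      ((meas_g hX p).add measurable_const).aestronglyMeasurable) ?_ (integrable_const 5) ?_
  · have hev : ∀ᶠ p in nhdsWithin (1:ℝ) (Set.Ioo (0:ℝ) 1), (1:ℝ)/2 < p ∧ p ∈ Set.Ioo (0:ℝ) 1 := by
      refine Eventually.and ?_ self_mem_nhdsWithin
      exact eventually_nhdsWithin_of_eventually_nhds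
        (eventually_of_mem (Ioi_mem_nhds (by norm_num)) fun p hp => hp)
    filter_upwards [hev] with p ⟨hp2, hp⟩
    filter_upwards [ae_restrict_of_ae hpos, ae_restrict_mem hs.compl] with ω hω hωs
    have hx1 : X ω < 1 := by simpa [Set.mem_compl_iff] using hωs
    have hd : 0 < p + (1 - p) * X ω := dpos hp.1 hp.2 hω
    have hd2 : (1:ℝ)/4 < (p + (1 - p) * X ω) ^ 2 := by
      have hdp : p ≤ p + (1 - p) * X ω := by
        nlinarith [mul_nonneg (by linarith [hp.2] : (0:ℝ) ≤ 1 - p) hω.le]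
      nlinarith [hp.1, hp.2]
    have habs : |X ω - 1| ≤ 1 := by rw [abs_le]; constructor <;> linarith
    have h1 : |(X ω - 1) / (p + (1 - p) * X ω) ^ 2| ≤ 4 := by
      rw [abs_div, abs_of_nonneg (sq_nonneg (p + (1 - p) * X ω)), div_le_iff₀ (pow_pos hd 2)]
      linarith
    calc ‖(X ω - 1) / (p + (1 - p) * X ω) ^ 2 + 1‖
        ≤ |(X ω - 1) / (p + (1 - p) * X ω) ^ 2| + 1 := by
          rw [Real.norm_eq_abs]; exact (abs_add_le _ _).trans (by norm_num)
      _ ≤ 5 := by linarith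
  · filter_upwards [ae_restrict_of_ae hpos] with ω hω
    have hc : ContinuousAt (fun p : ℝ => (X ω - 1) / (p + (1 - p) * X ω) ^ 2 + 1) 1 := by
      have hden : ((1:ℝ) + (1 - 1) * X ω) ^ 2 ≠ 0 := by norm_num
      exact (ContinuousAt.div continuousAt_const
        (((continuous_id.add ((continuous_const.sub continuous_id).mul continuous_const)).pow
          2).continuousAt) hden).add continuousAt_const
    have h5 : Tendsto (fun p : ℝ => (X ω - 1) / (p + (1 - p) * X ω) ^ 2 + 1)
        (nhdsWithin 1 (Set.Ioo (0:ℝ) 1)) (nhds ((X ω - 1) / (1 + (1 - 1) * X ω) ^ 2 + 1)) :=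
      hc.tendsto.mono_left nhdsWithin_le_nhds
    have : (X ω - 1) / ((1:ℝ) + (1 - 1) * X ω) ^ 2 + 1 = X ω := by norm_num
    rwa [this] at h5

lemma tendsto_one_main (hX : Measurable X) (hpos : ∀ᵐ ω ∂P, 0 < X ω) :
    Tendsto (fun p => ∫⁻ ω in {ω | 1 ≤ X ω},
        ENNReal.ofReal ((X ω - 1) / (p + (1 - p) * X ω) ^ 2 + 1) ∂P)
      (nhdsWithin 1 (Set.Ioo (0:ℝ) 1))
      (nhds (∫⁻ ω in {ω | 1 ≤ X ω}, ENNReal.ofReal (X ω) ∂P)) := by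
  haveI : (nhdsWithin (1:ℝ) (Set.Ioo (0:ℝ) 1)).NeBot := neBot1
  have hs : MeasurableSet {ω | 1 ≤ X ω} := hX_meas_set hX
  set l1 := nhdsWithin (1:ℝ) (Set.Ioo (0:ℝ) 1) with hl1
  set μs := P.restrict {ω | 1 ≤ X ω} with hμs
  set γ := ∫⁻ ω, ENNReal.ofReal (X ω - 1) ∂μs with hγdef
  set β := ∫⁻ ω, ENNReal.ofReal (X ω) ∂μs with hβdef
  have hμsuniv : μs Set.univ = P {ω | 1 ≤ X ω} := by
    rw [hμs, Measure.restrict_apply_univ]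
  have hβ : β = γ + P {ω | 1 ≤ X ω} := by
    have hae : ∀ᵐ ω ∂μs, ENNReal.ofReal (X ω) = ENNReal.ofReal (X ω - 1) + 1 := by
      filter_upwards [ae_restrict_mem hs] with ω hω
      have hx1 : (1:ℝ) ≤ X ω := hω
      rw [← ENNReal.ofReal_one, ← ENNReal.ofReal_add (by linarith) zero_le_one]
      norm_num
    rw [hβdef, lintegral_congr_ae hae, lintegral_add_right _ measurable_const,
      lintegral_const, hμsuniv, one_mul]
  refine tendsto_of_le_liminf_of_limsup_le ?_ ?_ (by isBoundedDefault) (by isBoundedDefault)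
  · -- β ≤ liminf
    set k : ℕ → Ω → ℝ := fun n ω => (X ω - 1) / (1 + 1 / ((n:ℝ) + 1) * X ω) ^ 2 with hk
    have hkmeas : ∀ n, Measurable fun ω => ENNReal.ofReal (k n ω) := fun n =>
      ENNReal.measurable_ofReal.comp ((hX.sub measurable_const).div
        ((measurable_const.add (hX.const_mul (1 / ((n:ℝ) + 1)))).pow_const 2))
    have hktend : Tendsto (fun n => ∫⁻ ω, ENNReal.ofReal (k n ω) ∂μs) atTop (nhds γ) := by
      apply lintegral_tendsto_of_tendsto_of_monotone
      · intro n; exact (hkmeas n).aemeasurable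
      · filter_upwards [ae_restrict_mem hs] with ω hω
        intro n m hnm
        apply ENNReal.ofReal_le_ofReal
        have hx1 : (1:ℝ) ≤ X ω := hω
        have hmn : 1 / ((m:ℝ) + 1) ≤ 1 / ((n:ℝ) + 1) := by
          apply one_div_le_one_div_of_le (by positivity)
          have : (n:ℝ) ≤ (m:ℝ) := by exact_mod_cast hnm
          linarith
        have hdm : (0:ℝ) < 1 + 1 / ((m:ℝ) + 1) * X ω := by positivity
        have hle : 1 + 1 / ((m:ℝ) + 1) * X ω ≤ 1 + 1 / ((n:ℝ) + 1) * X ω := by nlinarith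
        simp only [hk]
        gcongr
      · filter_upwards [ae_restrict_mem hs] with ω hω
        apply ENNReal.tendsto_ofReal
        have hc : ContinuousAt (fun ε : ℝ => (X ω - 1) / (1 + ε * X ω) ^ 2) 0 := by
          refine ContinuousAt.div continuousAt_const
            (((continuous_const.add (continuous_id.mul continuous_const)).pow 2).continuousAt) ?_
          norm_num
        have h6 := (hc.tendsto).comp tendsto_one_div_add_atTop_nhds_zero_nat
        norm_num at h6
        simpa [hk, Function.comp_def] using h6
    have hsum : Tendsto (fun n => ∫⁻ ω, ENNReal.ofReal (k n ω) ∂μs + P {ω | 1 ≤ X ω})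
        atTop (nhds β) := by
      rw [hβ]; exact hktend.add tendsto_const_nhds
    refine le_of_tendsto hsum (Eventually.of_forall fun n => ?_)
    refine Filter.le_liminf_of_le (by isBoundedDefault) ?_
    have hev : ∀ᶠ p in l1, 1 - 1 / ((n:ℝ) + 1) < p ∧ p ∈ Set.Ioo (0:ℝ) 1 := by
      refine Eventually.and ?_ self_mem_nhdsWithin
      exact eventually_nhdsWithin_of_eventually_nhds
        (eventually_of_mem (Ioi_mem_nhds (sub_lt_self 1 (by positivity : (0:ℝ) < 1/((n:ℝ)+1)))) fun p hp => hp)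
    filter_upwards [hev] with p hpp
    obtain ⟨hpn, hp⟩ := hpp
    have step : ∫⁻ ω, ENNReal.ofReal (k n ω) ∂μs + P {ω | 1 ≤ X ω}
        = ∫⁻ ω, (ENNReal.ofReal (k n ω) + 1) ∂μs := by
      rw [lintegral_add_right _ measurable_const, lintegral_const, hμsuniv, one_mul]
    rw [step]
    apply lintegral_mono_ae
    filter_upwards [ae_restrict_mem hs] with ω hω
    have hx1 : (1:ℝ) ≤ X ω := hω
    have hx0 : (0:ℝ) < X ω := lt_of_lt_of_le one_pos hx1
    have hd : 0 < p + (1 - p) * X ω := dpos hp.1 hp.2 hx0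
    have hkn : (0:ℝ) ≤ k n ω := by
      apply div_nonneg (by linarith) (sq_nonneg _)
    rw [← ENNReal.ofReal_one, ← ENNReal.ofReal_add hkn zero_le_one]
    apply ENNReal.ofReal_le_ofReal
    have hdle : p + (1 - p) * X ω ≤ 1 + 1 / ((n:ℝ) + 1) * X ω := by
      have h1 : (1 - p) ≤ 1 / ((n:ℝ) + 1) := by linarith
      nlinarith [hp.2, hx0]
    have : k n ω ≤ (X ω - 1) / (p + (1 - p) * X ω) ^ 2 := by
      simp only [hk]
      gcongr
    linarith
  · -- limsup ≤ β
    by_cases hγtop : γ = ⊤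
    · have hβtop : β = ⊤ := by rw [hβ, hγtop, top_add]
      rw [hβtop]; exact le_top
    have hub : ∀ᶠ p in l1, (∫⁻ ω, ENNReal.ofReal ((X ω - 1) / (p + (1 - p) * X ω) ^ 2 + 1) ∂μs)
        ≤ ENNReal.ofReal ((p⁻¹) ^ 2) * γ + P {ω | 1 ≤ X ω} := by
      filter_upwards [self_mem_nhdsWithin] with p hp
      have hstep : ∫⁻ ω, (ENNReal.ofReal ((p⁻¹) ^ 2 * (X ω - 1)) + 1) ∂μs
          = ENNReal.ofReal ((p⁻¹) ^ 2) * γ + P {ω | 1 ≤ X ω} := by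
        rw [lintegral_add_right _ measurable_const, lintegral_const, hμsuniv, one_mul]
        congr 1
        rw [← lintegral_const_mul' _ _ ENNReal.ofReal_ne_top]
        apply lintegral_congr_ae
        filter_upwards [ae_restrict_mem hs] with ω hω
        have hx1 : (1:ℝ) ≤ X ω := hω
        rw [ENNReal.ofReal_mul (by positivity)]
      rw [← hstep]
      apply lintegral_mono_ae
      filter_upwards [ae_restrict_mem hs] with ω hω
      have hx1 : (1:ℝ) ≤ X ω := hω
      have hx0 : (0:ℝ) < X ω := lt_of_lt_of_le one_pos hx1
      have hd : 0 < p + (1 - p) * X ω := dpos hp.1 hp.2 hx0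
      have hnum : (0:ℝ) ≤ (p⁻¹) ^ 2 * (X ω - 1) :=
        mul_nonneg (by positivity) (by linarith)
      rw [← ENNReal.ofReal_one, ← ENNReal.ofReal_add hnum zero_le_one]
      apply ENNReal.ofReal_le_ofReal
      have hple : p ≤ p + (1 - p) * X ω := by
        nlinarith [mul_nonneg (by linarith [hp.2] : (0:ℝ) ≤ 1 - p) hx0.le]
      have : (X ω - 1) / (p + (1 - p) * X ω) ^ 2 ≤ (X ω - 1) / p ^ 2 := by
        gcongr
        · exact pow_pos hp.1 2
        · exact hp.1.le
      have heq : (X ω - 1) / p ^ 2 = (p⁻¹) ^ 2 * (X ω - 1) := by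
        rw [div_eq_mul_inv, mul_comm, inv_pow]
      linarith [heq ▸ this]
    have htendU : Tendsto (fun p : ℝ => ENNReal.ofReal ((p⁻¹) ^ 2) * γ + P {ω | 1 ≤ X ω})
        l1 (nhds (1 * γ + P {ω | 1 ≤ X ω})) := by
      have h1 : Tendsto (fun p : ℝ => (p⁻¹) ^ 2) l1 (nhds 1) := by
        have hc : ContinuousAt (fun p : ℝ => (p⁻¹) ^ 2) 1 := by
          exact ((continuousAt_id.inv₀ one_ne_zero).pow 2)
        have h2 : Tendsto (fun p : ℝ => (p⁻¹) ^ 2) (nhds 1) (nhds (((1:ℝ)⁻¹) ^ 2)) := hc.tendsto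
        norm_num at h2
        exact Filter.Tendsto.congr (fun p => (inv_pow p 2).symm)
          (h2.mono_left nhdsWithin_le_nhds)
      have h3 : Tendsto (fun p : ℝ => ENNReal.ofReal ((p⁻¹) ^ 2)) l1 (nhds (ENNReal.ofReal 1)) :=
        ENNReal.tendsto_ofReal h1
      rw [ENNReal.ofReal_one] at h3
      exact (ENNReal.Tendsto.mul_const h3 (Or.inr hγtop)).add tendsto_const_nhds
    have hfin : (1:ℝ≥0∞) * γ + P {ω | 1 ≤ X ω} = β := by rw [one_mul, hβ]
    rw [hfin] at htendU
    exact le_trans (Filter.limsup_le_limsup hub) htendU.limsup_eq.le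

end F14

/-- **properties of the function `F`.** Let `X > 0` a.s. with
`P[X = 1] < 1`. Then `F(p) = E[1/(p + (1−p)·X)]` is continuously differentiable and
strictly convex on `(0,1)`, with `F(p) → E[X⁻¹]` as `p → 0` and `F′(p) → E[X] − 1` as
`p → 1` (both limits possibly `+∞`, encoded in `ℝ≥0∞` via `ENNReal.ofReal`, where
`F′(p) → E[X] − 1` is expressed as `ofReal (F′(p) + 1) → E[X]`). -/
theorem F_convex_differentiable_limits
    {Ω : Type*} {𝒜 : MeasurableSpace Ω}
    (P : @Measure Ω 𝒜) [IsProbabilityMeasure P]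
    (X : Ω → ℝ) (hX_meas : Measurable X) (hX_pos : ∀ᵐ ω ∂P, 0 < X ω)
    (hX_ne_one : P {ω | X ω = 1} < 1)
    (F : ℝ → ℝ) (hF : ∀ p ∈ Set.Ioo (0:ℝ) 1, F p = ∫ ω, 1 / (p + (1 - p) * X ω) ∂P) :
    StrictConvexOn ℝ (Set.Ioo (0:ℝ) 1) F ∧
    ∃ F' : ℝ → ℝ,
      (∀ p ∈ Set.Ioo (0:ℝ) 1, HasDerivAt F (F' p) p) ∧
      ContinuousOn F' (Set.Ioo (0:ℝ) 1) ∧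
      Tendsto (fun p => ENNReal.ofReal (F p)) (nhdsWithin 0 (Set.Ioo (0:ℝ) 1))
        (nhds (∫⁻ ω, ENNReal.ofReal (X ω)⁻¹ ∂P)) ∧
      Tendsto (fun p => ENNReal.ofReal (F' p + 1)) (nhdsWithin 1 (Set.Ioo (0:ℝ) 1))
        (nhds (∫⁻ ω, ENNReal.ofReal (X ω) ∂P)) := by
  have hSC : StrictConvexOn ℝ (Set.Ioo (0:ℝ) 1) F := by
    obtain ⟨hc, hlt⟩ := F14.strictConvex_int (P := P) hX_meas hX_pos hX_ne_one
    refine ⟨convex_Ioo 0 1, ?_⟩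
    intro p hp q hq hpq t u ht hu htu
    have hr : t • p + u • q ∈ Set.Ioo (0:ℝ) 1 := (convex_Ioo 0 1) hp hq ht.le hu.le htu
    rw [hF p hp, hF q hq, hF _ hr]
    exact hlt hp hq hpq ht hu htu
  refine ⟨hSC, fun p => ∫ ω, (X ω - 1) / (p + (1 - p) * X ω) ^ 2 ∂P, ?_, ?_, ?_, ?_⟩
  · intro p hp
    refine HasDerivAt.congr_of_eventuallyEq
      (F14.hasDerivAt_integral (P := P) hX_meas hX_pos hp.1 hp.2) ?_
    filter_upwards [isOpen_Ioo.mem_nhds hp] with q hq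
    exact hF q hq
  · intro p hp
    exact (F14.continuousAt_integral_g (P := P) hX_meas hX_pos hp.1 hp.2).continuousWithinAt
  · refine Tendsto.congr' ?_ (F14.tendsto_zero (P := P) hX_meas hX_pos)
    filter_upwards [self_mem_nhdsWithin] with p hp
    rw [hF p hp]
    refine (MeasureTheory.ofReal_integral_eq_lintegral_ofReal
      (F14.int_f hX_meas hX_pos hp.1 hp.2) ?_).symm
    filter_upwards [hX_pos] with ω hω
    have := F14.dpos hp.1 hp.2 hω
    positivity
  · set s := {ω | 1 ≤ X ω} with hsdef
    have hs : MeasurableSet s := F14.hX_meas_set hX_meas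
    set l1 := nhdsWithin (1:ℝ) (Set.Ioo (0:ℝ) 1) with hl1
    haveI : l1.NeBot := F14.neBot1
    set h : ℝ → Ω → ℝ := fun p ω => (X ω - 1) / (p + (1 - p) * X ω) ^ 2 + 1 with hh
    set A : ℝ → ℝ := fun p => ∫ ω in sᶜ, h p ω ∂P with hA
    set B : ℝ → ℝ := fun p => ∫ ω in s, h p ω ∂P with hB
    set Bl : ℝ → ℝ≥0∞ := fun p => ∫⁻ ω in s, ENNReal.ofReal (h p ω) ∂P with hBl
    set a := ∫ ω in sᶜ, X ω ∂P with ha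
    set β := ∫⁻ ω in s, ENNReal.ofReal (X ω) ∂P with hβ
    have hT1 : Tendsto A l1 (nhds a) := F14.tendsto_one_compl hX_meas hX_pos
    have hT2 : Tendsto Bl l1 (nhds β) := F14.tendsto_one_main hX_meas hX_pos
    have hint_h : ∀ p ∈ Set.Ioo (0:ℝ) 1, Integrable (h p) P := fun p hp =>
      (F14.int_g hX_meas hX_pos hp.1 hp.2).add (integrable_const 1)
    have hh_nonneg : ∀ p ∈ Set.Ioo (0:ℝ) 1, 0 ≤ᵐ[P.restrict s] h p := by
      intro p hp
      filter_upwards [ae_restrict_of_ae hX_pos, ae_restrict_mem hs] with ω hω hωs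
      have hx1 : (1:ℝ) ≤ X ω := hωs
      have hd := F14.dpos hp.1 hp.2 hω
      have h2 : 0 ≤ (X ω - 1) / (p + (1 - p) * X ω) ^ 2 := div_nonneg (by linarith) (sq_nonneg _)
      simp only [hh, Pi.zero_apply]; linarith
    have hB_nonneg : ∀ p ∈ Set.Ioo (0:ℝ) 1, 0 ≤ B p := fun p hp =>
      integral_nonneg_of_ae (hh_nonneg p hp)
    have hBconv : ∀ p ∈ Set.Ioo (0:ℝ) 1, ENNReal.ofReal (B p) = Bl p := fun p hp =>
      MeasureTheory.ofReal_integral_eq_lintegral_ofReal ((hint_h p hp).restrict) (hh_nonneg p hp)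
    have hkey : ∀ p ∈ Set.Ioo (0:ℝ) 1,
        (∫ ω, (X ω - 1) / (p + (1 - p) * X ω) ^ 2 ∂P) + 1 = B p + A p := by
      intro p hp
      have h1 : ∫ ω, h p ω ∂P = (∫ ω, (X ω - 1) / (p + (1 - p) * X ω) ^ 2 ∂P) + 1 := by
        simp only [hh]
        rw [integral_add (F14.int_g hX_meas hX_pos hp.1 hp.2) (integrable_const 1)]
        simp
      rw [← h1, ← integral_add_compl hs (hint_h p hp)]
    have ha0 : 0 ≤ a := integral_nonneg_of_ae
      (by filter_upwards [ae_restrict_of_ae hX_pos] with ω hω; exact hω.le)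
    have hofa : ENNReal.ofReal a = ∫⁻ ω in sᶜ, ENNReal.ofReal (X ω) ∂P := by
      apply MeasureTheory.ofReal_integral_eq_lintegral_ofReal
      · refine (integrable_const (1:ℝ)).mono' hX_meas.aestronglyMeasurable.restrict ?_
        filter_upwards [ae_restrict_of_ae hX_pos, ae_restrict_mem hs.compl] with ω hω hωs
        have hx1 : X ω < 1 := by
          simp only [hsdef, Set.mem_compl_iff, Set.mem_setOf_eq, not_le] at hωs
          exact hωs
        rw [Real.norm_eq_abs, abs_of_pos hω]; linarith
      · filter_upwards [ae_restrict_of_ae hX_pos] with ω hω; exact hω.le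
    have hT : (∫⁻ ω, ENNReal.ofReal (X ω) ∂P) = ENNReal.ofReal a + β := by
      rw [← lintegral_add_compl (fun ω => ENNReal.ofReal (X ω)) hs, hofa, add_comm]
    rw [hT]
    have hev : ∀ᶠ p in l1, ENNReal.ofReal (A p + B p)
        = ENNReal.ofReal ((∫ ω, (X ω - 1) / (p + (1 - p) * X ω) ^ 2 ∂P) + 1) := by
      filter_upwards [self_mem_nhdsWithin] with p hp
      rw [hkey p hp, add_comm (B p)]
    refine Tendsto.congr' hev ?_
    by_cases hβtop : β = ⊤
    · rw [hβtop, add_top]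
      apply ENNReal.tendsto_nhds_top
      intro n
      have hevA : ∀ᶠ p in l1, a - 1 < A p := hT1.eventually (eventually_gt_nhds (by linarith))
      have hevB : ∀ᶠ p in l1, ENNReal.ofReal ((n:ℝ) + 2 + |a|) < Bl p := by
        rw [hβtop] at hT2
        exact hT2.eventually (eventually_of_mem
          (Ioi_mem_nhds (ENNReal.ofReal_lt_top)) fun x hx => hx)
      filter_upwards [hevA, hevB, self_mem_nhdsWithin] with p h1 h2 hp
      rw [← hBconv p hp] at h2
      have h4 : (n:ℝ) + 2 + |a| < B p :=
        (ENNReal.ofReal_lt_ofReal_iff_of_nonneg (by positivity)).1 h2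
      have h5 : (n:ℝ) < A p + B p := by
        have h6 := abs_nonneg a
        have h7 := neg_abs_le a
        linarith
      calc ((n:ℕ):ℝ≥0∞) = ENNReal.ofReal (n:ℝ) := (ENNReal.ofReal_natCast n).symm
        _ < ENNReal.ofReal (A p + B p) := by
            rw [ENNReal.ofReal_lt_ofReal_iff_of_nonneg (Nat.cast_nonneg n)]; exact h5
    · have hBtend : Tendsto B l1 (nhds β.toReal) := by
        have h1 := (ENNReal.tendsto_toReal hβtop).comp hT2
        refine Tendsto.congr' ?_ h1
        filter_upwards [self_mem_nhdsWithin] with p hp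
        simp only [Function.comp_apply]
        rw [← hBconv p hp, ENNReal.toReal_ofReal (hB_nonneg p hp)]
      have hsum : Tendsto (fun p => A p + B p) l1 (nhds (a + β.toReal)) := hT1.add hBtend
      have hfin := ENNReal.tendsto_ofReal hsum
      rw [ENNReal.ofReal_add ha0 ENNReal.toReal_nonneg, ENNReal.ofReal_toReal hβtop] at hfin
      exact hfin
end

section
/- Let X > 0 be a random variable with P[X = 1] < 1 and E[X⁻¹] = 1. Then for every p ∈ (0,1) one has the strict inequality E[1/(p + (1−p)·X)] < 1. -/
open MeasureTheory Set

lemma key_identity {p x : ℝ} (hp : 0 < p) (hp1 : p < 1) (hx : 0 < x) :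
    (p + (1 - p) * x⁻¹) - (p + (1 - p) * x)⁻¹
      = (p * (1 - p) * (x - 1) ^ 2) / (x * (p + (1 - p) * x)) := by
  have hq : 0 < 1 - p := by linarith
  have hd : 0 < p + (1 - p) * x := by positivity
  field_simp
  ring

/-- Let `X > 0` a.s. with `P[X = 1] < 1` and `E[X⁻¹] = 1`. Then for
every `p ∈ (0,1)` one has the strict inequality `E[1/(p + (1−p)·X)] < 1`. -/
theorem strict_inequality_below_one
    {Ω : Type*} {𝒜 : MeasurableSpace Ω}
    (P : @Measure Ω 𝒜) [IsProbabilityMeasure P]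
    (X : Ω → ℝ) (hX_meas : Measurable X) (hX_pos : ∀ᵐ ω ∂P, 0 < X ω)
    (hX_ne_one : P {ω | X ω = 1} < 1)
    (hXinv : ∫⁻ ω, ENNReal.ofReal (X ω)⁻¹ ∂P = 1) :
    ∀ p ∈ Set.Ioo (0:ℝ) 1, ∫ ω, 1 / (p + (1 - p) * X ω) ∂P < 1 := by
  rintro p ⟨hp, hp1⟩
  have hq : 0 < 1 - p := by linarith
  set f : Ω → ℝ := fun ω => (p + (1 - p) * X ω)⁻¹ with hf_def
  set g : Ω → ℝ := fun ω => p + (1 - p) * (X ω)⁻¹ with hg_def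
  -- nonnegativity of X⁻¹ a.e.
  have hXinv_nonneg : 0 ≤ᵐ[P] fun ω => (X ω)⁻¹ :=
    hX_pos.mono fun ω hω => inv_nonneg.2 hω.le
  have hXinv_meas : AEStronglyMeasurable (fun ω => (X ω)⁻¹) P :=
    (hX_meas.inv).aestronglyMeasurable
  -- integrability of X⁻¹
  have hXinv_int : Integrable (fun ω => (X ω)⁻¹) P := by
    refine ⟨hXinv_meas, ?_⟩
    rw [hasFiniteIntegral_iff_ofReal hXinv_nonneg, hXinv]
    exact ENNReal.one_lt_top
  -- value of the integral of X⁻¹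
  have hXinv_val : ∫ ω, (X ω)⁻¹ ∂P = 1 := by
    rw [integral_eq_lintegral_of_nonneg_ae hXinv_nonneg hXinv_meas, hXinv]
    simp
  -- integrability and integral of g
  have hg_int : Integrable g P := by
    exact (integrable_const p).add (hXinv_int.const_mul (1 - p))
  have hg_val : ∫ ω, g ω ∂P = 1 := by
    rw [hg_def]
    rw [integral_add (integrable_const p) (hXinv_int.const_mul (1 - p)),
      integral_const_mul, hXinv_val]
    simp
  -- pointwise a.e. bound f ≤ g
  have hfg : ∀ᵐ ω ∂P, f ω ≤ g ω := by
    filter_upwards [hX_pos] with ω hω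
    have h := key_identity hp hp1 hω
    have hd : 0 < p + (1 - p) * X ω := by positivity
    have : 0 ≤ (p * (1 - p) * (X ω - 1) ^ 2) / (X ω * (p + (1 - p) * X ω)) := by
      positivity
    simp only [hf_def, hg_def]
    linarith [h ▸ this]
  have hf_nonneg : ∀ᵐ ω ∂P, 0 ≤ f ω := by
    filter_upwards [hX_pos] with ω hω
    have hd : 0 < p + (1 - p) * X ω := by positivity
    exact inv_nonneg.2 hd.le
  have hf_meas : AEStronglyMeasurable f P :=
    ((measurable_const.add (hX_meas.const_mul (1 - p))).inv).aestronglyMeasurable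
  have hf_int : Integrable f P := by
    refine hg_int.mono' hf_meas ?_
    filter_upwards [hfg, hf_nonneg] with ω h1 h2
    rwa [Real.norm_eq_abs, abs_of_nonneg h2]
  -- the difference is nonneg a.e. and integrable
  have hdiff_nonneg : 0 ≤ᵐ[P] fun ω => g ω - f ω := by
    filter_upwards [hfg] with ω h
    simp only [Pi.zero_apply]
    linarith
  have hdiff_int : Integrable (fun ω => g ω - f ω) P := hg_int.sub hf_int
  -- positivity of the difference integral via the support
  have hpos : 0 < ∫ ω, (g ω - f ω) ∂P := by
    rw [integral_pos_iff_support_of_nonneg_ae hdiff_nonneg hdiff_int]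
    have hms : MeasurableSet {ω | X ω = 1} := hX_meas (measurableSet_singleton 1)
    have hcompl : P {ω | X ω = 1}ᶜ = 1 - P {ω | X ω = 1} := by
      rw [measure_compl hms (measure_ne_top P _)]
      simp
    have h1 : 0 < P {ω | X ω ≠ 1} := by
      have : P {ω | X ω ≠ 1} = 1 - P {ω | X ω = 1} := hcompl
      rw [this]
      exact tsub_pos_of_lt hX_ne_one
    refine lt_of_lt_of_le h1 (measure_mono_ae ?_)
    filter_upwards [hX_pos] with ω hω hne
    have h := key_identity hp hp1 hω
    have hd : 0 < p + (1 - p) * X ω := by positivity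
    have hne' : X ω - 1 ≠ 0 := sub_ne_zero.2 hne
    have : 0 < (p * (1 - p) * (X ω - 1) ^ 2) / (X ω * (p + (1 - p) * X ω)) := by
      positivity
    intro hcontra
    have hc : p + (1 - p) * (X ω)⁻¹ - (p + (1 - p) * X ω)⁻¹ = 0 := hcontra
    rw [h] at hc
    linarith
  -- conclude
  have : ∫ ω, f ω ∂P < ∫ ω, g ω ∂P := by
    rw [integral_sub hg_int hf_int] at hpos
    linarith
  calc ∫ ω, 1 / (p + (1 - p) * X ω) ∂P = ∫ ω, f ω ∂P := by
        simp only [hf_def, one_div]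
    _ < ∫ ω, g ω ∂P := this
    _ = 1 := hg_val
end

section
/- Suppose λ₀ is non-constant under P₁ (i.e. P₁[λ₀ = c′] < 1 for every constant c′) and fix p₁ ∈ (0,1). Then there exists a unique c > 0 solving 1 = E₁[1/(p₁ + (1−p₁)·c·λ₀)], and this solution satisfies 1/E₁[λ₀] < c < E₁[1/λ₀]. -/
open MeasureTheory Set
set_option maxHeartbeats 1000000

private lemma convex_aux (a b : ℝ) (ha : 0 < a) (hb : 0 < b) :
    StrictConvexOn ℝ (Ici 0) (fun x : ℝ => (a + b * x)⁻¹) := by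
  have hz := strictConvexOn_zpow (by norm_num : (-1:ℤ) ≠ 0) (by norm_num : (-1:ℤ) ≠ 1)
  refine ⟨convex_Ici 0, ?_⟩
  intro x hx y hy hxy u v hu hv huv
  have hgx : a + b * x ∈ Ioi (0:ℝ) := by
    have : 0 ≤ b * x := mul_nonneg hb.le hx
    simpa using by linarith
  have hgy : a + b * y ∈ Ioi (0:ℝ) := by
    have : 0 ≤ b * y := mul_nonneg hb.le hy
    simpa using by linarith
  have hne : a + b * x ≠ a + b * y := by
    intro h
    exact hxy (by
      have : b * x = b * y := by linarith
      exact mul_left_cancel₀ hb.ne' this)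
  have := hz.2 hgx hgy hne hu hv huv
  simp only [smul_eq_mul, zpow_neg_one] at this
  have harg : u * (a + b * x) + v * (a + b * y) = a + b * (u • x + v • y) := by
    simp only [smul_eq_mul]; nlinarith [huv]
  rw [harg] at this
  simpa [smul_eq_mul] using this

private lemma concave_aux (a b : ℝ) (ha : 0 < a) (hb : 0 < b) :
    StrictConcaveOn ℝ (Ici 0) (fun x : ℝ => x / (a * x + b)) := by
  have hw := convex_aux b a hb ha
  refine ⟨convex_Ici 0, ?_⟩
  intro x hx y hy hxy u v hu hv huv
  have key : ∀ z : ℝ, z ∈ Ici (0:ℝ) → z / (a * z + b) = 1/a - (b/a) * (b + a * z)⁻¹ := by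
    intro z hz
    have hz' : 0 < a * z + b := by nlinarith [hz.out]
    have hz'' : (b + a * z) ≠ 0 := by linarith
    rw [show b + a * z = a * z + b by ring, div_eq_mul_inv]
    have hw1 : (a * z + b) * (a * z + b)⁻¹ = 1 := mul_inv_cancel₀ hz'.ne'
    have ha1 : a * a⁻¹ = 1 := mul_inv_cancel₀ ha.ne'
    linear_combination (1/a) * hw1 + (-(z * (a * z + b)⁻¹)) * ha1
  have hmem : u • x + v • y ∈ Ici (0:ℝ) := (convex_Ici 0) hx hy hu.le hv.le huv
  have hwlt := hw.2 hx hy hxy hu hv huv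
  simp only [smul_eq_mul] at hwlt ⊢
  have hmem' : u * x + v * y ∈ Ici (0:ℝ) := by simpa using hmem
  rw [key _ hx, key _ hy, key _ hmem']
  have hba : 0 < b / a := div_pos hb ha
  have h2 := mul_lt_mul_of_pos_left hwlt hba
  have h3 : u * (1/a) + v * (1/a) = 1/a := by rw [← add_mul, huv, one_mul]
  nlinarith [h2, h3]

private lemma integral_pos_of_ae_pos {Ω : Type*} {m : MeasurableSpace Ω} {P : Measure Ω}
    [IsProbabilityMeasure P] {f : Ω → ℝ} (hint : Integrable f P)
    (hpos : ∀ᵐ ω ∂P, 0 < f ω) : 0 < ∫ ω, f ω ∂P := by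
  rw [integral_pos_iff_support_of_nonneg_ae (hpos.mono fun ω h => h.le) hint]
  have hmem : ∀ᵐ ω ∂P, ω ∈ Function.support f := hpos.mono fun ω h => ne_of_gt h
  have hc : P (Function.support f)ᶜ = 0 := by
    rw [ae_iff] at hmem; simpa [Set.compl_def] using hmem
  by_contra h0
  push_neg at h0
  have h0' : P (Function.support f) = 0 := le_antisymm h0 zero_le
  have := measure_univ_le_add_compl (μ := P) (s := Function.support f)
  simp [h0', hc] at this

/-- **scaled likelihood ratio.** Suppose `λ₀` is non-constant under `P₁`
(i.e. `P₁[λ₀ = c′] < 1` for every constant `c′`) and fix `p₁ ∈ (0,1)`. Then there is a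
unique `c > 0` solving `1 = E₁[1/(p₁ + (1−p₁)·c·λ₀)]`, and every such solution satisfies
`1/E₁[λ₀] < c < E₁[1/λ₀]` (bounds interpreted in `[0,∞]`). -/
theorem scaled_likelihood_ratio
    {Ω : Type*} {𝒜 ℋ : MeasurableSpace Ω} (hℋ : ℋ ≤ 𝒜)
    (P₀ : @Measure Ω 𝒜) [IsProbabilityMeasure P₀]
    (P₁ : @Measure Ω ℋ) [IsProbabilityMeasure P₁] (habs : P₁ ≪ P₀.trim hℋ)
    (A : Set Ω) (hA : MeasurableSet[𝒜] A)
    (p₀ : ℝ) (hp₀ : p₀ = (P₀ A).toReal) (hp₀0 : 0 < p₀) (hp₀1 : p₀ < 1)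
    (μ : @Measure Ω ℋ) [SigmaFinite μ]
    (fA fAc : Ω → ℝ)
    (hfA_meas : @Measurable Ω ℝ ℋ _ fA) (hfAc_meas : @Measurable Ω ℝ ℋ _ fAc)
    (hfA_int : Integrable fA μ) (hfAc_int : Integrable fAc μ)
    (hfA_pos : ∀ᵐ ω ∂μ, 0 < fA ω) (hfAc_pos : ∀ᵐ ω ∂μ, 0 < fAc ω)
    (hdensA : ∀ H : Set Ω, MeasurableSet[ℋ] H →
      (P₀ (H ∩ A)).toReal = p₀ * ∫ ω in H, fA ω ∂μ)
    (hdensAc : ∀ H : Set Ω, MeasurableSet[ℋ] H →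
      (P₀ (H ∩ Aᶜ)).toReal = (1 - p₀) * ∫ ω in H, fAc ω ∂μ)
    (hnonconst : ∀ c' : ℝ, P₁ {ω | fAc ω / fA ω = c'} < 1)
    (p₁ : ℝ) (hp₁ : p₁ ∈ Set.Ioo (0:ℝ) 1) :
    (∃! c : ℝ, 0 < c ∧
      (1:ℝ) = ∫ ω, 1 / (p₁ + (1 - p₁) * (c * (fAc ω / fA ω))) ∂P₁) ∧
    (∀ c : ℝ, 0 < c →
      (1:ℝ) = ∫ ω, 1 / (p₁ + (1 - p₁) * (c * (fAc ω / fA ω))) ∂P₁ →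
      (∫⁻ ω, ENNReal.ofReal (fAc ω / fA ω) ∂P₁)⁻¹ < ENNReal.ofReal c ∧
        ENNReal.ofReal c < ∫⁻ ω, ENNReal.ofReal (fA ω / fAc ω) ∂P₁) := by
  letI : MeasurableSpace Ω := ℋ
  obtain ⟨hp₁0, hp₁1⟩ := hp₁
  have hq0 : 0 < 1 - p₁ := by linarith
  set L : Ω → ℝ := fun ω => fAc ω / fA ω with hLdef
  set F : ℝ → Ω → ℝ := fun c ω => 1 / (p₁ + (1 - p₁) * (c * L ω)) with hFdef
  -- a.e. positivity of densities under P₁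
  have hpos : ∀ᵐ ω ∂P₁, 0 < fA ω ∧ 0 < fAc ω := by
    set N : Set Ω := {ω | fA ω ≤ 0} ∪ {ω | fAc ω ≤ 0} with hNdef
    have hNm : MeasurableSet N :=
      (measurableSet_le hfA_meas measurable_const).union
        (measurableSet_le hfAc_meas measurable_const)
    have hμN : μ N = 0 := by
      apply measure_union_null
      · have : {ω | fA ω ≤ 0} ⊆ {ω | ¬ 0 < fA ω} := fun ω h => not_lt.mpr h
        exact measure_mono_null this (by rwa [← ae_iff])
      · have : {ω | fAc ω ≤ 0} ⊆ {ω | ¬ 0 < fAc ω} := fun ω h => not_lt.mpr h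
        exact measure_mono_null this (by rwa [← ae_iff])
    have hrestr : ∀ f : Ω → ℝ, ∫ ω in N, f ω ∂μ = 0 := by
      intro f
      rw [Measure.restrict_eq_zero.mpr hμN, integral_zero_measure]
    have hPA : P₀ (N ∩ A) = 0 := by
      have h := hdensA N hNm
      rw [hrestr, mul_zero] at h
      rcases (ENNReal.toReal_eq_zero_iff _).mp h with h' | h'
      · exact h'
      · exact absurd h' (measure_ne_top P₀ _)
    have hPAc : P₀ (N ∩ Aᶜ) = 0 := by
      have h := hdensAc N hNm
      rw [hrestr, mul_zero] at h
      rcases (ENNReal.toReal_eq_zero_iff _).mp h with h' | h'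
      · exact h'
      · exact absurd h' (measure_ne_top P₀ _)
    have hP₀N : P₀ N = 0 := by
      have h := measure_inter_add_diff (μ := P₀) N hA
      rw [diff_eq] at h
      rw [← h, hPA, hPAc, add_zero]
    have hP₁N : P₁ N = 0 := habs (by rwa [trim_measurableSet_eq hℋ hNm])
    rw [ae_iff]
    apply measure_mono_null _ hP₁N
    intro ω hω
    simp only [mem_setOf_eq, not_and_or, not_lt] at hω
    rcases hω with h | h
    · exact Or.inl h
    · exact Or.inr h
  have hLpos : ∀ᵐ ω ∂P₁, 0 < L ω := hpos.mono fun ω h => div_pos h.2 h.1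
  have hLmeas : Measurable L := hfAc_meas.div hfA_meas
  have hFmeas : ∀ c : ℝ, Measurable (F c) := fun c =>
    measurable_const.div (measurable_const.add (measurable_const.mul
      ((hLmeas.const_mul c))))
  have hFbdd : ∀ c : ℝ, 0 ≤ c → ∀ᵐ ω ∂P₁, 0 < F c ω ∧ F c ω ≤ 1 / p₁ := by
    intro c hc
    filter_upwards [hLpos] with ω hω
    have hd : p₁ ≤ p₁ + (1 - p₁) * (c * L ω) := by
      have : 0 ≤ (1 - p₁) * (c * L ω) := mul_nonneg hq0.le (mul_nonneg hc hω.le)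
      linarith
    constructor
    · apply div_pos one_pos; linarith
    · exact one_div_le_one_div_of_le hp₁0 hd
  have hFint : ∀ c : ℝ, 0 ≤ c → Integrable (F c) P₁ := by
    intro c hc
    refine Integrable.mono' (integrable_const (1 / p₁)) (hFmeas c).aestronglyMeasurable ?_
    filter_upwards [hFbdd c hc] with ω hω
    rw [Real.norm_eq_abs, abs_of_pos hω.1]; exact hω.2
  set g : ℝ → ℝ := fun c => ∫ ω, F c ω ∂P₁ with hgdef
  have hanti : ∀ c c' : ℝ, 0 ≤ c → c < c' → g c' < g c := by
    intro c c' hc hcc'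
    have hc' : 0 ≤ c' := le_of_lt (lt_of_le_of_lt hc hcc')
    have hdiffpos : ∀ᵐ ω ∂P₁, 0 < F c ω - F c' ω := by
      filter_upwards [hLpos] with ω hω
      have hd1 : 0 < p₁ + (1 - p₁) * (c * L ω) := by
        have : 0 ≤ (1 - p₁) * (c * L ω) := mul_nonneg hq0.le (mul_nonneg hc hω.le)
        linarith
      have hd2 : p₁ + (1 - p₁) * (c * L ω) < p₁ + (1 - p₁) * (c' * L ω) := by
        have : c * L ω < c' * L ω := mul_lt_mul_of_pos_right hcc' hω
        nlinarith
      have := one_div_lt_one_div_of_lt hd1 hd2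
      simp only [hFdef]; linarith
    have hint : Integrable (fun ω => F c ω - F c' ω) P₁ := (hFint c hc).sub (hFint c' hc')
    have h0 := integral_pos_of_ae_pos hint hdiffpos
    rw [integral_sub (hFint c hc) (hFint c' hc')] at h0
    simp only [hgdef]; linarith
  have hsmall : ∃ ε : ℝ, 0 < ε ∧ 1 < g ε := by
    have htend : Filter.Tendsto g (nhdsWithin 0 (Ioi 0)) (nhds (1 / p₁)) := by
      have h := tendsto_integral_filter_of_dominated_convergence (μ := P₁)
        (F := F) (f := fun _ => 1 / p₁) (bound := fun _ => 1 / p₁)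
        (l := nhdsWithin (0:ℝ) (Ioi 0))
        (Filter.Eventually.of_forall fun c => (hFmeas c).aestronglyMeasurable)
        (by
          filter_upwards [self_mem_nhdsWithin] with c (hc : c ∈ Ioi (0:ℝ))
          filter_upwards [hFbdd c (le_of_lt hc)] with ω hω
          rw [Real.norm_eq_abs, abs_of_pos hω.1]; exact hω.2)
        (integrable_const _)
        (by
          filter_upwards [hLpos] with ω hω
          have hdc : Filter.Tendsto (fun c : ℝ => p₁ + (1 - p₁) * (c * L ω))
              (nhds 0) (nhds p₁) := by
            have : Filter.Tendsto (fun c : ℝ => p₁ + (1 - p₁) * (c * L ω)) (nhds 0)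
                (nhds (p₁ + (1 - p₁) * (0 * L ω))) :=
              ((continuous_const.add (continuous_const.mul
                (continuous_id.mul continuous_const))).tendsto 0)
            simpa using this
          have := Filter.Tendsto.div (tendsto_const_nhds (x := (1:ℝ))) hdc hp₁0.ne'
          exact this.mono_left nhdsWithin_le_nhds)
      simpa [integral_const] using h
    have h11 : (1:ℝ) < 1 / p₁ := (one_lt_div hp₁0).mpr hp₁1
    have hev : ∀ᶠ c in nhdsWithin (0:ℝ) (Ioi 0), 1 < g c :=
      htend.eventually (eventually_gt_nhds h11)
    obtain ⟨ε, h1, h2⟩ := (hev.and self_mem_nhdsWithin).exists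
    exact ⟨ε, h2, h1⟩
  have hlarge : ∀ ε : ℝ, 0 < ε → ∃ C : ℝ, ε < C ∧ g C < 1 := by
    intro ε hε
    have htend : Filter.Tendsto g Filter.atTop (nhds 0) := by
      have h := tendsto_integral_filter_of_dominated_convergence (μ := P₁)
        (F := F) (f := fun _ => (0:ℝ)) (bound := fun _ => 1 / p₁)
        (l := Filter.atTop)
        (Filter.Eventually.of_forall fun c => (hFmeas c).aestronglyMeasurable)
        (by
          filter_upwards [Filter.eventually_ge_atTop (0:ℝ)] with c hc
          filter_upwards [hFbdd c hc] with ω hω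
          rw [Real.norm_eq_abs, abs_of_pos hω.1]; exact hω.2)
        (integrable_const _)
        (by
          filter_upwards [hLpos] with ω hω
          have hdtop : Filter.Tendsto (fun c : ℝ => p₁ + (1 - p₁) * (c * L ω))
              Filter.atTop Filter.atTop := by
            apply Filter.tendsto_atTop_add_const_left
            apply Filter.Tendsto.const_mul_atTop hq0
            exact Filter.Tendsto.atTop_mul_const hω Filter.tendsto_id
          have := tendsto_inv_atTop_zero.comp hdtop
          simpa [hFdef, one_div, Function.comp_def] using this)
      simpa [integral_zero] using h
    have hev : ∀ᶠ c in Filter.atTop, g c < 1 :=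
      htend.eventually (eventually_lt_nhds zero_lt_one)
    obtain ⟨C, h1, h2⟩ := (hev.and (Filter.eventually_gt_atTop ε)).exists
    exact ⟨C, h2, h1⟩
  have hcont : ∀ a b : ℝ, 0 < a → ContinuousOn g (Icc a b) := by
    intro a b ha
    intro c hc
    have hc0 : 0 < c := lt_of_lt_of_le ha hc.1
    apply ContinuousAt.continuousWithinAt
    have h := tendsto_integral_filter_of_dominated_convergence (μ := P₁)
      (F := F) (f := F c) (bound := fun _ => 1 / p₁)
      (l := nhds c)
      (Filter.Eventually.of_forall fun c' => (hFmeas c').aestronglyMeasurable)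
      (by
        filter_upwards [isOpen_Ioi.eventually_mem (show c ∈ Ioi (0:ℝ) from hc0)]
          with c' (hc' : c' ∈ Ioi (0:ℝ))
        filter_upwards [hFbdd c' (le_of_lt hc')] with ω hω
        rw [Real.norm_eq_abs, abs_of_pos hω.1]; exact hω.2)
      (integrable_const _)
      (by
        filter_upwards [hLpos] with ω hω
        have hd : p₁ + (1 - p₁) * (c * L ω) ≠ 0 := by
          have : 0 ≤ (1 - p₁) * (c * L ω) := mul_nonneg hq0.le (mul_nonneg hc0.le hω.le)
          linarith
        have hdc : Filter.Tendsto (fun c' : ℝ => p₁ + (1 - p₁) * (c' * L ω))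
            (nhds c) (nhds (p₁ + (1 - p₁) * (c * L ω))) :=
          ((continuous_const.add (continuous_const.mul
            (continuous_id.mul continuous_const))).tendsto c)
        exact Filter.Tendsto.div (tendsto_const_nhds (x := (1:ℝ))) hdc hd)
    exact h
  have hbound : ∀ c : ℝ, 0 < c → (1:ℝ) = g c →
      (∫⁻ ω, ENNReal.ofReal (fAc ω / fA ω) ∂P₁)⁻¹ < ENNReal.ofReal c ∧
        ENNReal.ofReal c < ∫⁻ ω, ENNReal.ofReal (fA ω / fAc ω) ∂P₁ := by
    intro c hc0 hceq
    have hqc : 0 < (1 - p₁) * c := mul_pos hq0 hc0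
    have hceq' : ∫ ω, (p₁ + (1 - p₁) * c * L ω)⁻¹ ∂P₁ = 1 := by
      have heq : (fun ω => (p₁ + (1 - p₁) * c * L ω)⁻¹) = F c := by
        funext ω; simp only [hFdef]; rw [one_div, mul_assoc]
      rw [heq]; exact hceq.symm
    constructor
    · -- lower bound
      by_cases htop : ∫⁻ ω, ENNReal.ofReal (fAc ω / fA ω) ∂P₁ = ⊤
      · rw [htop]; simpa using ENNReal.ofReal_pos.mpr hc0
      · have hLint : Integrable L P₁ := by
          refine ⟨hLmeas.aestronglyMeasurable, ?_⟩
          rw [hasFiniteIntegral_iff_ofReal (hLpos.mono fun ω h => h.le)]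
          exact lt_top_iff_ne_top.mpr htop
        have hm0 : 0 < ∫ ω, L ω ∂P₁ := integral_pos_of_ae_pos hLint hLpos
        have hofReal : ENNReal.ofReal (∫ ω, L ω ∂P₁)
            = ∫⁻ ω, ENNReal.ofReal (fAc ω / fA ω) ∂P₁ :=
          ofReal_integral_eq_lintegral_ofReal hLint (hLpos.mono fun ω h => h.le)
        have hconv := convex_aux p₁ ((1 - p₁) * c) hp₁0 hqc
        have hcontG : ContinuousOn (fun x : ℝ => (p₁ + (1 - p₁) * c * x)⁻¹) (Ici 0) := by
          apply ContinuousOn.inv₀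
          · exact (continuous_const.add (continuous_const.mul continuous_id)).continuousOn
          · intro x hx
            have hx0 : 0 ≤ (1 - p₁) * c * x := mul_nonneg hqc.le hx
            exact ne_of_gt (by linarith)
        have hGint : Integrable ((fun x : ℝ => (p₁ + (1 - p₁) * c * x)⁻¹) ∘ L) P₁ := by
          exact (hFint c hc0.le).congr (Filter.Eventually.of_forall fun ω => by
            simp only [hFdef, Function.comp]; rw [one_div, mul_assoc])
        rcases hconv.ae_eq_const_or_map_average_lt hcontG isClosed_Ici
          (hLpos.mono fun ω h => h.le) hLint hGint with hconst | hlt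
        · exfalso
          rw [average_eq_integral] at hconst
          have hconst' : ∀ᵐ ω ∂P₁, fAc ω / fA ω = ∫ ω, L ω ∂P₁ := hconst
          have hcompl : P₁ {ω | fAc ω / fA ω = ∫ ω, L ω ∂P₁}ᶜ = 0 := by
            rw [ae_iff] at hconst'
            simpa [Set.compl_setOf] using hconst'
          have h1 := measure_of_measure_compl_eq_zero hcompl
          rw [measure_univ] at h1
          exact absurd h1 (hnonconst _).ne
        · rw [average_eq_integral, average_eq_integral] at hlt
          rw [hceq'] at hlt
          set m := ∫ ω, L ω ∂P₁ with hmdef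
          have hdm : 0 < p₁ + (1 - p₁) * c * m := by nlinarith [mul_pos hqc hm0]
          have h3 : 1 < p₁ + (1 - p₁) * c * m := by
            nlinarith [mul_lt_mul_of_pos_left hlt hdm, mul_inv_cancel₀ hdm.ne']
          have h4 : m⁻¹ < c := by
            have h5 : 1 < c * m := by nlinarith
            rw [← one_div, div_lt_iff₀ hm0]; linarith
          rw [← hofReal, ← ENNReal.ofReal_inv_of_pos hm0]
          exact (ENNReal.ofReal_lt_ofReal_iff hc0).mpr h4
    · -- upper bound
      by_cases htop : ∫⁻ ω, ENNReal.ofReal (fA ω / fAc ω) ∂P₁ = ⊤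
      · rw [htop]; exact ENNReal.ofReal_lt_top
      · set η : Ω → ℝ := fun ω => fA ω / fAc ω with hηdef
        have hηpos : ∀ᵐ ω ∂P₁, 0 < η ω := hpos.mono fun ω h => div_pos h.1 h.2
        have hηmeas : Measurable η := hfA_meas.div hfAc_meas
        have hηint : Integrable η P₁ := by
          refine ⟨hηmeas.aestronglyMeasurable, ?_⟩
          rw [hasFiniteIntegral_iff_ofReal (hηpos.mono fun ω h => h.le)]
          exact lt_top_iff_ne_top.mpr htop
        have hm0 : 0 < ∫ ω, η ω ∂P₁ := integral_pos_of_ae_pos hηint hηpos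
        have hofReal : ENNReal.ofReal (∫ ω, η ω ∂P₁)
            = ∫⁻ ω, ENNReal.ofReal (fA ω / fAc ω) ∂P₁ :=
          ofReal_integral_eq_lintegral_ofReal hηint (hηpos.mono fun ω h => h.le)
        have hconc := concave_aux p₁ ((1 - p₁) * c) hp₁0 hqc
        have hcontH : ContinuousOn (fun x : ℝ => x / (p₁ * x + (1 - p₁) * c)) (Ici 0) := by
          apply ContinuousOn.div continuous_id.continuousOn
          · exact ((continuous_const.mul continuous_id).add continuous_const).continuousOn
          · intro x hx
            have hx0 : 0 ≤ p₁ * x := mul_nonneg hp₁0.le hx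
            exact ne_of_gt (by linarith)
        have hcomp : ∀ᵐ ω ∂P₁,
            (fun x : ℝ => x / (p₁ * x + (1 - p₁) * c)) (η ω) = F c ω := by
          filter_upwards [hpos] with ω hω
          obtain ⟨h1, h2⟩ := hω
          have hη0 : 0 < η ω := div_pos h1 h2
          have hL0 : 0 < L ω := div_pos h2 h1
          have hd1 : 0 < p₁ * η ω + (1 - p₁) * c := by nlinarith [mul_pos hp₁0 hη0]
          have hd2 : 0 < p₁ + (1 - p₁) * (c * L ω) := by
            nlinarith [mul_pos hqc hL0]
          simp only [hFdef, hηdef, hLdef]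
          rw [div_eq_div_iff (by positivity : p₁ * (fA ω / fAc ω) + (1 - p₁) * c ≠ 0)
            (by simp only [hηdef, hLdef] at hd2 ⊢; exact hd2.ne')]
          field_simp
        have hHint : Integrable ((fun x : ℝ => x / (p₁ * x + (1 - p₁) * c)) ∘ η) P₁ :=
          (hFint c hc0.le).congr (hcomp.mono fun ω e => e.symm)
        rcases hconc.ae_eq_const_or_lt_map_average hcontH isClosed_Ici
          (hηpos.mono fun ω h => h.le) hηint hHint with hconst | hlt
        · exfalso
          rw [average_eq_integral] at hconst
          set m := ∫ ω, η ω ∂P₁ with hmdef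
          have hLconst : ∀ᵐ ω ∂P₁, fAc ω / fA ω = m⁻¹ := by
            filter_upwards [hconst, hpos] with ω he hω
            have : η ω = m := he
            rw [← this, hηdef]
            simp only
            rw [inv_div]
          have hcompl : P₁ {ω | fAc ω / fA ω = m⁻¹}ᶜ = 0 := by
            rw [ae_iff] at hLconst
            simpa [Set.compl_setOf] using hLconst
          have h1 := measure_of_measure_compl_eq_zero hcompl
          rw [measure_univ] at h1
          exact absurd h1 (hnonconst _).ne
        · rw [average_eq_integral, average_eq_integral] at hlt
          have hint1 : ∫ ω, (fun x : ℝ => x / (p₁ * x + (1 - p₁) * c)) (η ω) ∂P₁ = 1 := by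
            rw [integral_congr_ae hcomp]; exact hceq.symm
          rw [hint1] at hlt
          set m := ∫ ω, η ω ∂P₁ with hmdef
          have hd : 0 < p₁ * m + (1 - p₁) * c := by nlinarith [mul_pos hp₁0 hm0]
          have h3 : p₁ * m + (1 - p₁) * c < m := by
            have := (lt_div_iff₀ hd).mp hlt
            linarith
          have h4 : c < m := by nlinarith
          rw [← hofReal]
          exact (ENNReal.ofReal_lt_ofReal_iff hm0).mpr h4
  obtain ⟨ε, hε, hgε⟩ := hsmall
  obtain ⟨C, hεC, hgC⟩ := hlarge ε hε
  obtain ⟨c, hcmem, hgc⟩ := intermediate_value_Icc' hεC.le (hcont ε C hε)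
    (⟨hgC.le, hgε.le⟩ : (1:ℝ) ∈ Icc (g C) (g ε))
  have hcpos : 0 < c := lt_of_lt_of_le hε hcmem.1
  refine ⟨⟨c, ⟨hcpos, hgc.symm⟩, ?_⟩, fun c' hc' heq => hbound c' hc' heq⟩
  rintro y ⟨hy0, hyeq⟩
  have hyg : g y = 1 := hyeq.symm
  rcases lt_trichotomy y c with h | h | h
  · exfalso; have := hanti y c hy0.le h; rw [hyg, hgc] at this; exact lt_irrefl 1 this
  · exact h
  · exfalso; have := hanti c y hcpos.le h; rw [hyg, hgc] at this; exact lt_irrefl 1 this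
end

section
/- Let f_A, f_{A^c} be measurable functions that are positive μ-almost everywhere with ∫ f_A dμ = 1 = ∫ f_{A^c} dμ, and suppose μ(f_A ≠ f_{A^c}) > 0. Then for every p ∈ (0,1), ∫ f_A·f_{A^c}/(p·f_A + (1−p)·f_{A^c}) dμ < 1, while for p = 0 the integral equals 1. -/
open MeasureTheory Set

/-- Let `f_A, f_{A^c}` be measurable functions, positive `μ`-a.e.,
with `∫ f_A dμ = 1 = ∫ f_{A^c} dμ`, and suppose `μ(f_A ≠ f_{A^c}) > 0`. Then for every
`p ∈ (0,1)`, `∫ f_A·f_{A^c}/(p·f_A + (1−p)·f_{A^c}) dμ < 1`, while for `p = 0` the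
integral equals `1`. -/
theorem mixed_density_integral_lt_one
    {Ω : Type*} {ℋ : MeasurableSpace Ω} (μ : Measure Ω) [SigmaFinite μ]
    (fA fAc : Ω → ℝ) (hfA_meas : Measurable fA) (hfAc_meas : Measurable fAc)
    (hfA_pos : ∀ᵐ ω ∂μ, 0 < fA ω) (hfAc_pos : ∀ᵐ ω ∂μ, 0 < fAc ω)
    (hfA_one : ∫ ω, fA ω ∂μ = 1) (hfAc_one : ∫ ω, fAc ω ∂μ = 1)
    (hne : μ {ω | fA ω ≠ fAc ω} ≠ 0) :
    (∀ p ∈ Set.Ioo (0:ℝ) 1,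
      ∫ ω, fA ω * fAc ω / (p * fA ω + (1 - p) * fAc ω) ∂μ < 1) ∧
    ∫ ω, fA ω * fAc ω / ((0:ℝ) * fA ω + (1 - 0) * fAc ω) ∂μ = 1 := by
  have hfA_int : Integrable fA μ := by
    by_contra h; rw [integral_undef h] at hfA_one; norm_num at hfA_one
  have hfAc_int : Integrable fAc μ := by
    by_contra h; rw [integral_undef h] at hfAc_one; norm_num at hfAc_one
  have hpos : ∀ᵐ ω ∂μ, 0 < fA ω ∧ 0 < fAc ω := hfA_pos.and hfAc_pos
  constructor
  · rintro p ⟨hp0, hp1⟩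
    set g : Ω → ℝ := fun ω => fA ω * fAc ω / (p * fA ω + (1 - p) * fAc ω) with hg
    set h : Ω → ℝ := fun ω => p * fAc ω + (1 - p) * fA ω with hh
    have hp1' : 0 < 1 - p := by linarith
    -- key identity
    have key : ∀ ω, 0 < fA ω → 0 < fAc ω →
        h ω - g ω = p * (1 - p) * (fA ω - fAc ω) ^ 2 / (p * fA ω + (1 - p) * fAc ω) := by
      intro ω ha hb
      have hD : 0 < p * fA ω + (1 - p) * fAc ω := by nlinarith
      simp only [hg, hh]
      field_simp
      ring
    have hdiff_nonneg : ∀ᵐ ω ∂μ, 0 ≤ h ω - g ω := by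
      filter_upwards [hpos] with ω ⟨ha, hb⟩
      rw [key ω ha hb]
      have hD : 0 < p * fA ω + (1 - p) * fAc ω := by nlinarith
      positivity
    have hg_nonneg : ∀ᵐ ω ∂μ, 0 ≤ g ω := by
      filter_upwards [hpos] with ω ⟨ha, hb⟩
      have hD : 0 < p * fA ω + (1 - p) * fAc ω := by nlinarith
      have : 0 ≤ fA ω * fAc ω := by positivity
      exact div_nonneg this hD.le
    have hh_int : Integrable h μ := (hfAc_int.const_mul p).add (hfA_int.const_mul (1 - p))
    have hh_one : ∫ ω, h ω ∂μ = 1 := by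
      simp only [hh]
      rw [integral_add (hfAc_int.const_mul p) (hfA_int.const_mul (1 - p)),
        integral_const_mul, integral_const_mul, hfA_one, hfAc_one]
      ring
    have hg_meas : Measurable g :=
      (hfA_meas.mul hfAc_meas).div ((hfA_meas.const_mul p).add (hfAc_meas.const_mul (1 - p)))
    have hg_int : Integrable g μ := by
      refine hh_int.mono hg_meas.aestronglyMeasurable ?_
      filter_upwards [hdiff_nonneg, hg_nonneg] with ω h1 h2
      rw [Real.norm_eq_abs, Real.norm_eq_abs, abs_of_nonneg h2, abs_of_nonneg (by linarith)]
      linarith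
    have hdiff_int : Integrable (fun ω => h ω - g ω) μ := hh_int.sub hg_int
    -- positive measure support
    have hsupp : 0 < μ (Function.support fun ω => h ω - g ω) := by
      have hle : μ {ω | fA ω ≠ fAc ω} ≤ μ (Function.support fun ω => h ω - g ω) := by
        refine measure_mono_ae ?_
        filter_upwards [hpos] with ω ⟨ha, hb⟩ hmem
        have hD : 0 < p * fA ω + (1 - p) * fAc ω := by nlinarith
        have hab : fA ω ≠ fAc ω := hmem
        have : 0 < h ω - g ω := by
          rw [key ω ha hb]
          have hsq : 0 < (fA ω - fAc ω) ^ 2 := by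
            have h0 : fA ω - fAc ω ≠ 0 := sub_ne_zero.mpr hab
            positivity
          exact div_pos (mul_pos (mul_pos hp0 hp1') hsq) hD
        exact ne_of_gt this
      exact lt_of_lt_of_le (pos_iff_ne_zero.mpr hne) hle
    have hpos_int : 0 < ∫ ω, (h ω - g ω) ∂μ :=
      (integral_pos_iff_support_of_nonneg_ae hdiff_nonneg hdiff_int).mpr hsupp
    rw [integral_sub hh_int hg_int, hh_one] at hpos_int
    linarith
  · have : ∀ᵐ ω ∂μ, fA ω * fAc ω / ((0:ℝ) * fA ω + (1 - 0) * fAc ω) = fA ω := by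
      filter_upwards [hfAc_pos] with ω hb
      field_simp
      rw [mul_zero, zero_add, sub_zero, mul_one, mul_div_assoc, div_self hb.ne', mul_one]
    rw [integral_congr_ae this, hfA_one]
end
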